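/- arXiv:1207.0199 — 12 statements merged into one kernel-verified Lean document; each statement's English description precedes it below -/
import Mathlib

section
/- Let l > 0, S̄, S_F ∈ ℝ, let f : ℝ → ℝ be twice differentiable with f(t) > 0 for all t, and set v(t) = f(t)². Then S̄ = S_F/f(t)² - 2l·f''(t)/f(t) - l(l-1)·f'(t)²/f(t)² + 2l²·f'(t)/f(t) + (1-l)·l holds for all t ∈ ℝ if and only if v''(t) + ((l-3)/4)·v'(t)²/v(t) - l·v'(t) + (l - 1 + S̄/l)·v(t) - S_F/l = 0 holds for all t ∈ ℝ. -/
theorem stmt_7 (l Sbar SF : ℝ) (hl : 0 < l) (f : ℝ → ℝ)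
    (hf : Differentiable ℝ f) (hf' : Differentiable ℝ (deriv f))
    (hfpos : ∀ t : ℝ, 0 < f t) (v : ℝ → ℝ) (hv : ∀ t : ℝ, v t = f t ^ 2) :
    (∀ t : ℝ, Sbar = SF / f t ^ 2 - 2 * l * deriv (deriv f) t / f t
        - l * (l - 1) * (deriv f t) ^ 2 / f t ^ 2
        + 2 * l ^ 2 * deriv f t / f t + (1 - l) * l) ↔
    (∀ t : ℝ, deriv (deriv v) t + ((l - 3) / 4) * (deriv v t) ^ 2 / v t
        - l * deriv v t + (l - 1 + Sbar / l) * v t - SF / l = 0) := by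
  have hdv : ∀ t : ℝ, deriv v t = 2 * f t * deriv f t := by
    intro t
    have hveq : v = fun s => f s ^ 2 := funext hv
    rw [hveq]
    have := ((hf t).hasDerivAt.pow 2).deriv
    simp at this
    simpa [mul_comm, mul_assoc, Pi.pow_def] using this
  have hdv' : ∀ t : ℝ,
      deriv (deriv v) t = 2 * (deriv f t * deriv f t + f t * deriv (deriv f) t) := by
    intro t
    have hdveq : deriv v = fun s => 2 * f s * deriv f s := funext hdv
    rw [hdveq]
    have h1 : HasDerivAt (fun s => 2 * f s * deriv f s)
        (2 * ((deriv f t) * deriv f t + f t * deriv (deriv f) t)) t := by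
      have := (((hf t).hasDerivAt).mul ((hf' t).hasDerivAt)).const_mul (2 : ℝ)
      simpa [mul_assoc] using this
    exact h1.deriv
  have hl0 : l ≠ 0 := ne_of_gt hl
  constructor
  · intro h t
    have ht := h t
    have hft : f t ≠ 0 := ne_of_gt (hfpos t)
    rw [hdv, hdv', hv]
    linear_combination (norm := (field_simp; ring)) (f t ^ 2 / l) * ht
  · intro h t
    have ht := h t
    have hft : f t ≠ 0 := ne_of_gt (hfpos t)
    rw [hdv, hdv', hv] at ht
    linear_combination (norm := (field_simp; ring)) (l / f t ^ 2) * ht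
end

section
/- Let l > 0 with l ≠ 3, let S̄ ∈ ℝ with S̄ < l/(l+1), and let v : ℝ → ℝ be twice differentiable with v(t) > 0 for all t. Set a = (l + √(1 - ((l+1)/l)·S̄))/2 and b = (l - √(1 - ((l+1)/l)·S̄))/2. Then v''(t)/v(t) + ((l-3)/4)·(v'(t)/v(t))² - l·v'(t)/v(t) + (l - 1 + S̄/l) = 0 for all t ∈ ℝ if and only if there exist constants c₁, c₂ ∈ ℝ such that c₁·exp(a·t) + c₂·exp(b·t) > 0 for all t and v(t) = (c₁·exp(a·t) + c₂·exp(b·t))^{4/(l+1)} for all t ∈ ℝ. -/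
private lemma hasDerivAt_expc (c t : ℝ) :
    HasDerivAt (fun s => Real.exp (c * s)) (c * Real.exp (c * t)) t := by
  simpa [mul_comm] using ((hasDerivAt_id t).const_mul c).exp

private lemma ode_lin (A B K : ℝ) (hAB : A ≠ B) (f : ℝ → ℝ) (hf : Differentiable ℝ f)
    (h : ∀ t, deriv f t = B * f t + K * Real.exp (A * t)) :
    ∀ t, f t = (K / (A - B)) * Real.exp (A * t) + (f 0 - K / (A - B)) * Real.exp (B * t) := by
  have hABne : A - B ≠ 0 := sub_ne_zero.2 hAB
  set g : ℝ → ℝ := fun t => f t * Real.exp (-B * t) - (K / (A - B)) * Real.exp ((A - B) * t)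
    with hg
  have hgd : ∀ t, HasDerivAt g 0 t := by
    intro t
    have h1 : HasDerivAt f (B * f t + K * Real.exp (A * t)) t := by
      rw [← h t]; exact (hf t).hasDerivAt
    have h2 := hasDerivAt_expc (-B) t
    have h3 := (hasDerivAt_expc (A - B) t).const_mul (K / (A - B))
    have h4 := (h1.mul h2).sub h3
    refine h4.congr_deriv (Eq.symm ?_)
    have hexp : Real.exp (A * t) * Real.exp (-B * t) = Real.exp ((A - B) * t) := by
      rw [← Real.exp_add]; ring_nf
    have hK : K / (A - B) * ((A - B) * Real.exp ((A - B) * t))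
        = K * Real.exp ((A - B) * t) := by field_simp
    linear_combination -K * hexp + hK
  have hconst : ∀ t, g t = g 0 :=
    fun t => is_const_of_deriv_eq_zero (fun x => (hgd x).differentiableAt)
      (fun x => (hgd x).deriv) t 0
  intro t
  have htc := hconst t
  have hg0 : g 0 = f 0 - K / (A - B) := by simp [hg]
  rw [hg0] at htc
  have e1 : Real.exp ((A - B) * t) * Real.exp (B * t) = Real.exp (A * t) := by
    rw [← Real.exp_add]; ring_nf
  have e2 : Real.exp (-B * t) * Real.exp (B * t) = 1 := by
    rw [← Real.exp_add]; ring_nf; exact Real.exp_zero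
  have htc' : f t * Real.exp (-B * t) - (K / (A - B)) * Real.exp ((A - B) * t)
      = f 0 - K / (A - B) := htc
  linear_combination Real.exp (B * t) * htc' - f t * e2 + (K / (A - B)) * e1

private lemma ode_second (L Q A B : ℝ) (hAB : A ≠ B) (hsum : A + B = L) (hprod : A * B = Q)
    (w : ℝ → ℝ) (hw : Differentiable ℝ w) (hw' : Differentiable ℝ (deriv w))
    (h : ∀ t, deriv (deriv w) t = L * deriv w t - Q * w t) :
    ∃ c₁ c₂ : ℝ, ∀ t, w t = c₁ * Real.exp (A * t) + c₂ * Real.exp (B * t) := by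
  set u : ℝ → ℝ := fun t => deriv w t - B * w t with hu
  have hud : Differentiable ℝ u := hw'.sub (hw.const_mul B)
  have hude : ∀ t, deriv u t = A * u t + 0 * Real.exp ((A + 1) * t) := by
    intro t
    have hd : HasDerivAt u (deriv (deriv w) t - B * deriv w t) t :=
      ((hw' t).hasDerivAt).sub (((hw t).hasDerivAt).const_mul B)
    rw [hd.deriv, h t, hu]
    simp only
    linear_combination (w t) * hprod - (deriv w t) * hsum
  have husol := ode_lin (A + 1) A 0 (by intro hc; linarith [hc]) u hud hude
  have husol' : ∀ t, u t = u 0 * Real.exp (A * t) := by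
    intro t; have := husol t; simpa using this
  have hwe : ∀ t, deriv w t = B * w t + (deriv w 0 - B * w 0) * Real.exp (A * t) := by
    intro t
    have h5 := husol' t
    simp only [hu] at h5
    linarith [h5]
  have hwsol := ode_lin A B (deriv w 0 - B * w 0) hAB w hw hwe
  exact ⟨_, _, hwsol⟩

private lemma key_alg_fwd (l C Q v dv ddv X Y A : ℝ) (hv : v ≠ 0)
    (hP : ddv / v + ((l - 3) / 4) * (dv / v) ^ 2 - l * (dv / v) + C = 0)
    (h4 : 4 * Q = (l + 1) * C)
    (hX : X * v = A) (hY : Y * v * v = A) :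
    ddv * ((l + 1) / 4) * X + dv * ((l + 1) / 4) * (dv * ((l + 1) / 4 - 1) * Y)
      = l * (dv * ((l + 1) / 4) * X) - Q * A := by
  have hXA : X = A / v := by rw [eq_div_iff hv]; exact hX
  have hYA : Y = A / (v * v) := by
    rw [eq_div_iff (mul_ne_zero hv hv), ← mul_assoc]; exact hY
  subst hXA hYA
  linear_combination ((l+1)*A/4) * hP + (A/4) * h4

private lemma key_alg_bwd (l C Q m w W1 W2 X Y A : ℝ) (hw : w ≠ 0) (hA : A ≠ 0)
    (hm : m * (l + 1) = 4) (hCQ : C = m * Q)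
    (hW2 : W2 = l * W1 - Q * w)
    (hX : X * w = A) (hY : Y * w * w = A) :
    (W2 * m * X + W1 * m * (W1 * (m - 1) * Y)) / A
      + ((l - 3) / 4) * ((W1 * m * X) / A) ^ 2 - l * ((W1 * m * X) / A) + C = 0 := by
  have hXA : X = A / w := by rw [eq_div_iff hw]; exact hX
  have hYA : Y = A / (w * w) := by
    rw [eq_div_iff (mul_ne_zero hw hw), ← mul_assoc]; exact hY
  subst hXA hYA hW2 hCQ
  have hAA : A * A⁻¹ = 1 := mul_inv_cancel₀ hA
  have hww : w * w⁻¹ = 1 := mul_inv_cancel₀ hw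
  linear_combination (W1^2*m/(4*w^2))*hm + (-Q*m + W1^2*m*(m-1)/w^2 + (l-3)/4*W1^2*m^2/w^2*(A*A⁻¹+1)) * hAA - Q*m*A*A⁻¹ * hww
theorem stmt_9 (l Sbar : ℝ) (hl : 0 < l) (hl3 : l ≠ 3)
    (hS : Sbar < l / (l + 1)) (v : ℝ → ℝ)
    (hv : Differentiable ℝ v) (hv' : Differentiable ℝ (deriv v))
    (hvpos : ∀ t : ℝ, 0 < v t)
    (a b : ℝ)
    (ha : a = (l + Real.sqrt (1 - ((l + 1) / l) * Sbar)) / 2)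
    (hb : b = (l - Real.sqrt (1 - ((l + 1) / l) * Sbar)) / 2) :
    (∀ t : ℝ, deriv (deriv v) t / v t + ((l - 3) / 4) * (deriv v t / v t) ^ 2
        - l * (deriv v t / v t) + (l - 1 + Sbar / l) = 0) ↔
    ∃ c₁ c₂ : ℝ, (∀ t : ℝ, 0 < c₁ * Real.exp (a * t) + c₂ * Real.exp (b * t)) ∧
      ∀ t : ℝ, v t = (c₁ * Real.exp (a * t) + c₂ * Real.exp (b * t)) ^ ((4 : ℝ) / (l + 1)) := by
  have hl1 : (0:ℝ) < l + 1 := by linarith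
  have hvne : ∀ t, v t ≠ 0 := fun t => (hvpos t).ne'
  have hD : 0 < 1 - ((l + 1) / l) * Sbar := by
    have h1 : ((l + 1) / l) * Sbar < ((l + 1) / l) * (l / (l + 1)) :=
      mul_lt_mul_of_pos_left hS (by positivity)
    have h2 : ((l + 1) / l) * (l / (l + 1)) = 1 := by field_simp
    linarith
  have hs : 0 < Real.sqrt (1 - ((l + 1) / l) * Sbar) := Real.sqrt_pos.2 hD
  have hs2 : Real.sqrt (1 - ((l + 1) / l) * Sbar) ^ 2 = 1 - ((l + 1) / l) * Sbar :=
    Real.sq_sqrt hD.le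
  have hsum : a + b = l := by rw [ha, hb]; ring
  have habs : a - b = Real.sqrt (1 - ((l + 1) / l) * Sbar) := by rw [ha, hb]; ring
  have hne : a ≠ b := by
    intro h; rw [h, sub_self] at habs; linarith [habs ▸ hs]
  have hprod4 : 4 * (a * b) = (l + 1) * (l - 1 + Sbar / l) := by
    rw [ha, hb]
    linear_combination -hs2
  have hpm : ((l + 1) / 4) * ((4:ℝ) / (l + 1)) = 1 := by field_simp
  constructor
  · -- forward direction
    intro hODE
    set w : ℝ → ℝ := fun t => v t ^ ((l + 1) / 4) with hwdef
    have hw1 : ∀ t, HasDerivAt w (deriv v t * ((l + 1) / 4) * v t ^ ((l + 1) / 4 - 1)) t :=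
      fun t => ((hv t).hasDerivAt).rpow_const (Or.inl (hvne t))
    have hwD : Differentiable ℝ w := fun t => (hw1 t).differentiableAt
    have hdw : deriv w = fun t => deriv v t * ((l + 1) / 4) * v t ^ ((l + 1) / 4 - 1) :=
      funext fun t => (hw1 t).deriv
    have hw2 : ∀ t, HasDerivAt (deriv w)
        (deriv (deriv v) t * ((l + 1) / 4) * v t ^ ((l + 1) / 4 - 1)
          + deriv v t * ((l + 1) / 4)
            * (deriv v t * ((l + 1) / 4 - 1) * v t ^ ((l + 1) / 4 - 1 - 1))) t := by
      intro t
      rw [hdw]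
      exact (((hv' t).hasDerivAt).mul_const ((l + 1) / 4)).mul
        (((hv t).hasDerivAt).rpow_const (Or.inl (hvne t)))
    have hdwD : Differentiable ℝ (deriv w) := fun t => (hw2 t).differentiableAt
    have hww : ∀ t, deriv (deriv w) t = l * deriv w t - (a * b) * w t := by
      intro t
      rw [(hw2 t).deriv, hdw]
      simp only [hwdef]
      have e1 : v t ^ ((l + 1) / 4 - 1) * v t = v t ^ ((l + 1) / 4) := by
        rw [← Real.rpow_add_one (hvne t)]; congr 1; ring
      have e2 : v t ^ ((l + 1) / 4 - 1 - 1) * v t * v t = v t ^ ((l + 1) / 4) := by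
        rw [← Real.rpow_add_one (hvne t), ← Real.rpow_add_one (hvne t)]; congr 1; ring
      have := key_alg_fwd l (l - 1 + Sbar / l) (a * b) (v t) (deriv v t)
        (deriv (deriv v) t) (v t ^ ((l + 1) / 4 - 1)) (v t ^ ((l + 1) / 4 - 1 - 1))
        (v t ^ ((l + 1) / 4)) (hvne t) (hODE t) hprod4 e1 e2
      linarith [this]
    obtain ⟨c₁, c₂, hsol⟩ := ode_second l (a * b) a b hne hsum rfl w hwD hdwD hww
    refine ⟨c₁, c₂, fun t => ?_, fun t => ?_⟩
    · rw [← hsol t]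
      exact Real.rpow_pos_of_pos (hvpos t) _
    · rw [← hsol t]
      simp only [hwdef]
      rw [← Real.rpow_mul (hvpos t).le, hpm, Real.rpow_one]
  · -- backward direction
    rintro ⟨c₁, c₂, hpos, hveq⟩
    intro t
    set w : ℝ → ℝ := fun t => c₁ * Real.exp (a * t) + c₂ * Real.exp (b * t) with hwdef
    have hwne : ∀ s, w s ≠ 0 := fun s => (hpos s).ne'
    have hvfun : v = fun s => w s ^ ((4:ℝ) / (l + 1)) := funext hveq
    have hw1 : ∀ s, HasDerivAt w
        (c₁ * (a * Real.exp (a * s)) + c₂ * (b * Real.exp (b * s))) s :=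
      fun s => ((hasDerivAt_expc a s).const_mul c₁).add ((hasDerivAt_expc b s).const_mul c₂)
    have hv1 : ∀ s, HasDerivAt v
        ((c₁ * (a * Real.exp (a * s)) + c₂ * (b * Real.exp (b * s))) * ((4:ℝ) / (l + 1))
          * w s ^ ((4:ℝ) / (l + 1) - 1)) s := by
      intro s
      rw [hvfun]
      exact (hw1 s).rpow_const (Or.inl (hwne s))
    have hdv : deriv v = fun s =>
        (c₁ * (a * Real.exp (a * s)) + c₂ * (b * Real.exp (b * s))) * ((4:ℝ) / (l + 1))
          * w s ^ ((4:ℝ) / (l + 1) - 1) := funext fun s => (hv1 s).deriv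
    have hW1d : ∀ s, HasDerivAt
        (fun s => c₁ * (a * Real.exp (a * s)) + c₂ * (b * Real.exp (b * s)))
        (c₁ * (a * (a * Real.exp (a * s))) + c₂ * (b * (b * Real.exp (b * s)))) s :=
      fun s => (((hasDerivAt_expc a s).const_mul a).const_mul c₁).add
        (((hasDerivAt_expc b s).const_mul b).const_mul c₂)
    have hv2 : HasDerivAt (deriv v)
        ((c₁ * (a * (a * Real.exp (a * t))) + c₂ * (b * (b * Real.exp (b * t))))
            * ((4:ℝ) / (l + 1)) * w t ^ ((4:ℝ) / (l + 1) - 1)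
          + (c₁ * (a * Real.exp (a * t)) + c₂ * (b * Real.exp (b * t))) * ((4:ℝ) / (l + 1))
            * ((c₁ * (a * Real.exp (a * t)) + c₂ * (b * Real.exp (b * t)))
                * ((4:ℝ) / (l + 1) - 1) * w t ^ ((4:ℝ) / (l + 1) - 1 - 1))) t := by
      rw [hdv]
      exact (((hW1d t).mul_const ((4:ℝ) / (l + 1)))).mul
        ((hw1 t).rpow_const (Or.inl (hwne t)))
    have hdvt : deriv v t = (c₁ * (a * Real.exp (a * t)) + c₂ * (b * Real.exp (b * t)))
        * ((4:ℝ) / (l + 1)) * w t ^ ((4:ℝ) / (l + 1) - 1) := (hv1 t).deriv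
    have hvt : v t = w t ^ ((4:ℝ) / (l + 1)) := hveq t
    rw [hv2.deriv, hdvt, hvt]
    have e1 : w t ^ ((4:ℝ) / (l + 1) - 1) * w t = w t ^ ((4:ℝ) / (l + 1)) := by
      rw [← Real.rpow_add_one (hwne t)]; congr 1; ring
    have e2 : w t ^ ((4:ℝ) / (l + 1) - 1 - 1) * w t * w t = w t ^ ((4:ℝ) / (l + 1)) := by
      rw [← Real.rpow_add_one (hwne t), ← Real.rpow_add_one (hwne t)]; congr 1; ring
    have hm : ((4:ℝ) / (l + 1)) * (l + 1) = 4 := by field_simp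
    have hCQ : (l - 1 + Sbar / l) = ((4:ℝ) / (l + 1)) * (a * b) := by
      rw [div_mul_eq_mul_div, eq_div_iff hl1.ne']
      linear_combination -hprod4
    have hW2 : c₁ * (a * (a * Real.exp (a * t))) + c₂ * (b * (b * Real.exp (b * t)))
        = l * (c₁ * (a * Real.exp (a * t)) + c₂ * (b * Real.exp (b * t))) - (a * b) * w t := by
      simp only [hwdef]
      linear_combination (c₁ * (a * Real.exp (a * t)) + c₂ * (b * Real.exp (b * t))) * hsum
    exact key_alg_bwd l (l - 1 + Sbar / l) (a * b) ((4:ℝ) / (l + 1)) (w t)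
      (c₁ * (a * Real.exp (a * t)) + c₂ * (b * Real.exp (b * t)))
      (c₁ * (a * (a * Real.exp (a * t))) + c₂ * (b * (b * Real.exp (b * t))))
      (w t ^ ((4:ℝ) / (l + 1) - 1)) (w t ^ ((4:ℝ) / (l + 1) - 1 - 1))
      (w t ^ ((4:ℝ) / (l + 1))) (hwne t) (Real.rpow_pos_of_pos (hpos t) _).ne'
      hm hCQ hW2 e1 e2
end

section
/- Let l > 0 with l ≠ 3, and let v : ℝ → ℝ be twice differentiable with v(t) > 0 for all t. Then v''(t)/v(t) + ((l-3)/4)·(v'(t)/v(t))² - l·v'(t)/v(t) + (l - 1 + (l/(l+1))/l) = 0 for all t ∈ ℝ (i.e., the equation with S̄ = l/(l+1)) if and only if there exist constants c₁, c₂ ∈ ℝ such that c₁·exp((l/2)·t) + c₂·t·exp((l/2)·t) > 0 for all t and v(t) = (c₁·exp((l/2)·t) + c₂·t·exp((l/2)·t))^{4/(l+1)} for all t ∈ ℝ. -/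
open Real

private lemma stmt_10_aux1 (l v d d2 W b : ℝ) (hl : 0 < l) (hv : 0 < v)
    (hW : W ≠ 0) (hb : b = (l + 1) / 4)
    (E : d2 / v + (l - 3) / 4 * (d / v) ^ 2 - l * (d / v) + (l - 1 + l / (l + 1) / l) = 0) :
    d2 * b * (W / v) + d * b * (d * (b - 1) * (W / v / v))
      = l * (d * b * (W / v)) - (l ^ 2 / 4) * W := by
  subst hb
  have hb1 : (l + 1) / 4 - 1 = (l - 3) / 4 := by ring
  rw [hb1]
  have hv0 : v ≠ 0 := ne_of_gt hv
  have hl0 : l ≠ 0 := ne_of_gt hl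
  have hl1' : l + 1 ≠ 0 := by nlinarith
  refine mul_left_cancel₀ hl0 ?_
  field_simp at E ⊢
  linear_combination E

private lemma stmt_10_aux2 (l g g1 W : ℝ) (hl : 0 < l) (hg : g ≠ 0) (hW : W ≠ 0) :
    ((l * g1 - (l ^ 2 / 4) * g) * (4 / (l + 1)) * (W / g)
        + g1 * (4 / (l + 1)) * (g1 * ((4 / (l + 1)) - 1) * (W / g / g))) / W
      + ((l - 3) / 4) * ((g1 * (4 / (l + 1)) * (W / g)) / W) ^ 2
      - l * ((g1 * (4 / (l + 1)) * (W / g)) / W)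
      + (l - 1 + (l / (l + 1)) / l) = 0 := by
  have hl0 : l ≠ 0 := ne_of_gt hl
  have hl1 : l + 1 ≠ 0 := by nlinarith
  field_simp
  ring

theorem stmt_10 (l : ℝ) (hl : 0 < l) (hl3 : l ≠ 3) (v : ℝ → ℝ)
    (hv : Differentiable ℝ v) (hv' : Differentiable ℝ (deriv v))
    (hvpos : ∀ t : ℝ, 0 < v t) :
    (∀ t : ℝ, deriv (deriv v) t / v t + ((l - 3) / 4) * (deriv v t / v t) ^ 2
        - l * (deriv v t / v t) + (l - 1 + (l / (l + 1)) / l) = 0) ↔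
    ∃ c₁ c₂ : ℝ,
      (∀ t : ℝ, 0 < c₁ * Real.exp ((l / 2) * t) + c₂ * t * Real.exp ((l / 2) * t)) ∧
      ∀ t : ℝ, v t = (c₁ * Real.exp ((l / 2) * t)
        + c₂ * t * Real.exp ((l / 2) * t)) ^ ((4 : ℝ) / (l + 1)) := by
  have hl1 : (0:ℝ) < l + 1 := by linarith
  have hl1' : l + 1 ≠ 0 := ne_of_gt hl1
  have hl0 : l ≠ 0 := ne_of_gt hl
  have hvne : ∀ t, v t ≠ 0 := fun t => ne_of_gt (hvpos t)
  have hexp : ∀ t : ℝ, HasDerivAt (fun s : ℝ => Real.exp ((l/2) * s)) ((l/2) * Real.exp ((l/2) * t)) t := by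
    intro t
    have h1 : HasDerivAt (fun s : ℝ => (l/2) * s) (l/2) t := by
      simpa using (hasDerivAt_id t).const_mul (l/2)
    simpa [mul_comm] using h1.exp
  constructor
  · intro hode
    set b : ℝ := (l + 1) / 4 with hb
    set w : ℝ → ℝ := fun t => v t ^ b with hw
    set w1 : ℝ → ℝ := fun t => deriv v t * b * v t ^ (b - 1) with hw1
    set w2 : ℝ → ℝ := fun t =>
      deriv (deriv v) t * b * v t ^ (b - 1)
        + deriv v t * b * (deriv v t * (b - 1) * v t ^ (b - 1 - 1)) with hw2
    have hdw : ∀ t, HasDerivAt w (w1 t) t := by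
      intro t
      exact ((hv t).hasDerivAt.rpow_const (Or.inl (hvne t)))
    have hdw1 : ∀ t, HasDerivAt w1 (w2 t) t := by
      intro t
      have h1 : HasDerivAt (fun s => deriv v s * b) (deriv (deriv v) t * b) t :=
        (hv' t).hasDerivAt.mul_const b
      have h2 : HasDerivAt (fun s => v s ^ (b - 1)) (deriv v t * (b - 1) * v t ^ (b - 1 - 1)) t :=
        (hv t).hasDerivAt.rpow_const (Or.inl (hvne t))
      exact h1.mul h2
    have key : ∀ t, w2 t = l * w1 t - (l^2 / 4) * w t := by
      intro t
      have E := hode t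
      have r1 : v t ^ (b - 1) = v t ^ b / v t := by
        rw [Real.rpow_sub (hvpos t), Real.rpow_one]
      have r2 : v t ^ (b - 1 - 1) = v t ^ b / v t / v t := by
        rw [Real.rpow_sub (hvpos t), Real.rpow_sub (hvpos t), Real.rpow_one]
      have hwne : v t ^ b ≠ 0 := ne_of_gt (Real.rpow_pos_of_pos (hvpos t) b)
      simp only [hw2, hw1, hw, r1, r2]
      exact stmt_10_aux1 l (v t) (deriv v t) (deriv (deriv v) t) (v t ^ b) b
        hl (hvpos t) hwne hb E
    have hexp' : ∀ t : ℝ, HasDerivAt (fun s : ℝ => Real.exp (-(l/2) * s)) (-(l/2) * Real.exp (-(l/2) * t)) t := by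
      intro t
      have h1 : HasDerivAt (fun s : ℝ => -(l/2) * s) (-(l/2)) t := by
        simpa using (hasDerivAt_id t).const_mul (-(l/2))
      simpa [mul_comm] using h1.exp
    set h : ℝ → ℝ := fun t => Real.exp (-(l/2) * t) * w t with hh
    set h1 : ℝ → ℝ := fun t => Real.exp (-(l/2) * t) * (w1 t - (l/2) * w t) with hh1
    have hdh : ∀ t, HasDerivAt h (h1 t) t := by
      intro t
      have := (hexp' t).mul (hdw t)
      refine this.congr_deriv ?_
      simp only [hh1]; ring
    have hdh1 : ∀ t, HasDerivAt h1 0 t := by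
      intro t
      have hsub : HasDerivAt (fun s => w1 s - (l/2) * w s) (w2 t - (l/2) * w1 t) t :=
        (hdw1 t).sub ((hdw t).const_mul (l/2))
      have := (hexp' t).mul hsub
      refine this.congr_deriv ?_
      rw [key t]; ring
    have hconst1 : ∀ t, h1 t = h1 0 := by
      intro t
      exact is_const_of_deriv_eq_zero (fun s => (hdh1 s).differentiableAt)
        (fun s => (hdh1 s).deriv) t 0
    set c₂ : ℝ := h1 0 with hc2
    have hconst2 : ∀ t, h t - c₂ * t = h 0 := by
      intro t
      have hd : ∀ s : ℝ, HasDerivAt (fun u => h u - c₂ * u) 0 s := by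
        intro s
        have h0 := (hdh s).sub ((hasDerivAt_id s).const_mul c₂)
        exact h0.congr_deriv (by simp [hconst1 s])
      have := is_const_of_deriv_eq_zero (fun s => (hd s).differentiableAt)
        (fun s => (hd s).deriv) t 0
      simpa using this
    set c₁ : ℝ := h 0 with hc1
    have hwt : ∀ t, w t = c₁ * Real.exp ((l/2) * t) + c₂ * t * Real.exp ((l/2) * t) := by
      intro t
      have e1 : h t = c₁ + c₂ * t := by have := hconst2 t; linarith
      have e2 : Real.exp (-(l/2) * t) * w t = c₁ + c₂ * t := e1
      have e3 : Real.exp (-(l/2) * t) * Real.exp ((l/2) * t) = 1 := by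
        rw [← Real.exp_add]
        norm_num
      calc w t = (Real.exp (-(l/2) * t) * w t) * Real.exp ((l/2) * t) := by
              rw [mul_comm (Real.exp _) (w t), mul_assoc, e3, mul_one]
        _ = (c₁ + c₂ * t) * Real.exp ((l/2) * t) := by rw [e2]
        _ = _ := by ring
    refine ⟨c₁, c₂, ?_, ?_⟩
    · intro t
      rw [← hwt t]
      exact Real.rpow_pos_of_pos (hvpos t) b
    · intro t
      rw [← hwt t]
      have hmul : b * ((4:ℝ)/(l+1)) = 1 := by rw [hb]; field_simp
      rw [hw]
      rw [← Real.rpow_mul (le_of_lt (hvpos t)), hmul, Real.rpow_one]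
  · rintro ⟨c₁, c₂, hgpos, hveq⟩
    set g : ℝ → ℝ := fun t => (c₁ + c₂ * t) * Real.exp ((l/2) * t) with hg
    have hgpos' : ∀ t, 0 < g t := by
      intro t
      have := hgpos t
      have he : (c₁ + c₂ * t) * Real.exp ((l/2) * t)
          = c₁ * Real.exp ((l / 2) * t) + c₂ * t * Real.exp ((l / 2) * t) := by ring
      rw [hg]; simpa [he] using this
    have hgne : ∀ t, g t ≠ 0 := fun t => ne_of_gt (hgpos' t)
    have hveq' : v = fun t => g t ^ ((4:ℝ)/(l+1)) := by
      funext t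
      rw [hveq t, hg]
      congr 1
      ring
    set g1 : ℝ → ℝ := fun t => (c₂ + (l/2) * (c₁ + c₂ * t)) * Real.exp ((l/2) * t) with hg1
    set g2 : ℝ → ℝ := fun t => ((l/2) * c₂ + (l/2) * (c₂ + (l/2) * (c₁ + c₂ * t))) * Real.exp ((l/2) * t) with hg2
    have hdg : ∀ t, HasDerivAt g (g1 t) t := by
      intro t
      have hlin : HasDerivAt (fun s : ℝ => c₁ + c₂ * s) c₂ t := by
        exact ((hasDerivAt_const t c₁).add ((hasDerivAt_id t).const_mul c₂)).congr_deriv (by simp)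
      have := hlin.mul (hexp t)
      refine this.congr_deriv ?_
      simp only [hg1]; ring
    have hdg1 : ∀ t, HasDerivAt g1 (g2 t) t := by
      intro t
      have hlin : HasDerivAt (fun s : ℝ => c₂ + (l/2) * (c₁ + c₂ * s)) ((l/2) * c₂) t := by
        have : HasDerivAt (fun s : ℝ => (c₂ + (l/2) * c₁) + ((l/2) * c₂) * s) ((l/2) * c₂) t := by
          exact ((hasDerivAt_const t (c₂ + (l/2) * c₁)).add
            ((hasDerivAt_id t).const_mul ((l/2) * c₂))).congr_deriv (by simp)
        convert this using 2 with s
        ring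
      have := hlin.mul (hexp t)
      refine this.congr_deriv ?_
      simp only [hg2]; ring
    have key2 : ∀ t, g2 t = l * g1 t - (l^2/4) * g t := by
      intro t
      simp only [hg2, hg1, hg]
      ring
    have hdv : ∀ t, HasDerivAt v (g1 t * ((4:ℝ)/(l+1)) * g t ^ ((4:ℝ)/(l+1) - 1)) t := by
      intro t
      rw [hveq']
      exact (hdg t).rpow_const (Or.inl (hgne t))
    have hderiv : deriv v = fun t => g1 t * ((4:ℝ)/(l+1)) * g t ^ ((4:ℝ)/(l+1) - 1) :=
      funext fun t => (hdv t).deriv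
    have hdv' : ∀ t, HasDerivAt (deriv v)
        (g2 t * ((4:ℝ)/(l+1)) * g t ^ ((4:ℝ)/(l+1) - 1)
          + g1 t * ((4:ℝ)/(l+1)) * (g1 t * ((4:ℝ)/(l+1) - 1) * g t ^ ((4:ℝ)/(l+1) - 1 - 1))) t := by
      intro t
      rw [hderiv]
      have h1 : HasDerivAt (fun s => g1 s * ((4:ℝ)/(l+1))) (g2 t * ((4:ℝ)/(l+1))) t :=
        (hdg1 t).mul_const _
      have h2 : HasDerivAt (fun s => g s ^ ((4:ℝ)/(l+1) - 1))
          (g1 t * ((4:ℝ)/(l+1) - 1) * g t ^ ((4:ℝ)/(l+1) - 1 - 1)) t :=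
        (hdg t).rpow_const (Or.inl (hgne t))
      exact h1.mul h2
    intro t
    have hd1 : deriv v t = g1 t * ((4:ℝ)/(l+1)) * g t ^ ((4:ℝ)/(l+1) - 1) := by
      rw [hderiv]
    have hd2 : deriv (deriv v) t
        = g2 t * ((4:ℝ)/(l+1)) * g t ^ ((4:ℝ)/(l+1) - 1)
          + g1 t * ((4:ℝ)/(l+1)) * (g1 t * ((4:ℝ)/(l+1) - 1) * g t ^ ((4:ℝ)/(l+1) - 1 - 1)) :=
      (hdv' t).deriv
    have hvt : v t = g t ^ ((4:ℝ)/(l+1)) := by rw [hveq']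
    have r1 : g t ^ ((4:ℝ)/(l+1) - 1) = g t ^ ((4:ℝ)/(l+1)) / g t := by
      rw [Real.rpow_sub (hgpos' t), Real.rpow_one]
    have r2 : g t ^ ((4:ℝ)/(l+1) - 1 - 1) = g t ^ ((4:ℝ)/(l+1)) / g t / g t := by
      rw [Real.rpow_sub (hgpos' t), Real.rpow_sub (hgpos' t), Real.rpow_one]
    have hWne : g t ^ ((4:ℝ)/(l+1)) ≠ 0 := ne_of_gt (Real.rpow_pos_of_pos (hgpos' t) _)
    rw [hd1, hd2, hvt, r1, r2, key2 t]
    exact stmt_10_aux2 l (g t) (g1 t) (g t ^ ((4:ℝ)/(l+1))) hl (hgne t) hWne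
end

section
/- Let l > 0 with l ≠ 3, let S̄ ∈ ℝ with S̄ > l/(l+1), and let v : ℝ → ℝ be twice differentiable with v(t) > 0 for all t. Set θ = √(((l+1)/l)·S̄ - 1)/2. Then v''(t)/v(t) + ((l-3)/4)·(v'(t)/v(t))² - l·v'(t)/v(t) + (l - 1 + S̄/l) = 0 for all t ∈ ℝ if and only if there exist constants c₁, c₂ ∈ ℝ such that c₁·exp((l/2)·t)·cos(θt) + c₂·exp((l/2)·t)·sin(θt) > 0 for all t and v(t) = (c₁·exp((l/2)·t)·cos(θt) + c₂·exp((l/2)·t)·sin(θt))^{4/(l+1)} for all t ∈ ℝ. -/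
lemma aux_harmonic (θ : ℝ) (hθ : θ ≠ 0) (g g1 : ℝ → ℝ)
    (hg : ∀ t, HasDerivAt g (g1 t) t)
    (hg1 : ∀ t, HasDerivAt g1 (-(θ^2) * g t) t) (t : ℝ) :
    g t = g 0 * Real.cos (θ*t) + (g1 0/θ) * Real.sin (θ*t) := by
  have hcos : ∀ s : ℝ, HasDerivAt (fun s => Real.cos (θ*s)) (-(θ * Real.sin (θ*s))) s := by
    intro s
    have h := (((hasDerivAt_id s).const_mul θ)).cos
    simpa [mul_comm] using h
  have hsin : ∀ s : ℝ, HasDerivAt (fun s => Real.sin (θ*s)) (θ * Real.cos (θ*s)) s := by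
    intro s
    have h := (((hasDerivAt_id s).const_mul θ)).sin
    simpa [mul_comm] using h
  set C₁ : ℝ → ℝ := fun s => g s * Real.cos (θ*s) - (g1 s/θ) * Real.sin (θ*s) with hC₁def
  set C₂ : ℝ → ℝ := fun s => g s * Real.sin (θ*s) + (g1 s/θ) * Real.cos (θ*s) with hC₂def
  have hC₁ : ∀ s, HasDerivAt C₁ 0 s := by
    intro s
    have h := ((hg s).mul (hcos s)).sub (((hg1 s).div_const θ).mul (hsin s))
    refine h.congr_deriv ?_
    field_simp
    ring
  have hC₂ : ∀ s, HasDerivAt C₂ 0 s := by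
    intro s
    have h := ((hg s).mul (hsin s)).add (((hg1 s).div_const θ).mul (hcos s))
    refine h.congr_deriv ?_
    field_simp
    ring
  have e1 : C₁ t = C₁ 0 :=
    is_const_of_deriv_eq_zero (fun s => (hC₁ s).differentiableAt) (fun s => (hC₁ s).deriv) t 0
  have e2 : C₂ t = C₂ 0 :=
    is_const_of_deriv_eq_zero (fun s => (hC₂ s).differentiableAt) (fun s => (hC₂ s).deriv) t 0
  have v1 : C₁ 0 = g 0 := by simp [hC₁def]
  have v2 : C₂ 0 = g1 0 / θ := by simp [hC₂def]
  have hpyth := Real.sin_sq_add_cos_sq (θ*t)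
  have key : C₁ t * Real.cos (θ*t) + C₂ t * Real.sin (θ*t) = g t := by
    simp only [hC₁def, hC₂def]
    linear_combination (g t) * hpyth
  rw [e1, v1, e2, v2] at key
  linarith [key]

lemma aux_forward (l c θ : ℝ) (hθ : θ ≠ 0) (hθ2 : θ^2 = c - (l/2)^2)
    (u u1 : ℝ → ℝ)
    (hud : ∀ t, HasDerivAt u (u1 t) t)
    (hu1d : ∀ t, HasDerivAt u1 (l * u1 t - c * u t) t) (t : ℝ) :
    u t = Real.exp ((l/2)*t) * (u 0 * Real.cos (θ*t)
      + ((u1 0 - (l/2) * u 0)/θ) * Real.sin (θ*t)) := by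
  set E : ℝ → ℝ := fun s => Real.exp (-(l/2)*s) with hEdef
  have hE : ∀ s, HasDerivAt E (-(l/2) * E s) s := by
    intro s
    have h := ((hasDerivAt_id s).const_mul (-(l/2))).exp
    simp only [id_eq] at h
    convert h using 1
    simp only [hEdef]
    ring
  set g : ℝ → ℝ := fun s => u s * E s with hgdef
  set g1 : ℝ → ℝ := fun s => u1 s * E s - (l/2) * (u s * E s) with hg1def
  have hg : ∀ s, HasDerivAt g (g1 s) s := by
    intro s
    have h := (hud s).mul (hE s)
    refine h.congr_deriv ?_
    simp only [hg1def]
    ring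
  have hg1 : ∀ s, HasDerivAt g1 (-(θ^2) * g s) s := by
    intro s
    have h := ((hu1d s).mul (hE s)).sub (((hud s).mul (hE s)).const_mul (l/2))
    refine h.congr_deriv ?_
    simp only [hgdef]
    rw [hθ2]
    ring
  have key := aux_harmonic θ hθ g g1 hg hg1 t
  have hE0 : E 0 = 1 := by simp [hEdef]
  have hg0 : g 0 = u 0 := by simp only [hgdef]; rw [hE0]; ring
  have hg10 : g1 0 = u1 0 - (l/2) * u 0 := by simp only [hg1def]; rw [hE0]; ring
  rw [hg0, hg10] at key
  have hEne : Real.exp ((l/2)*t) * E t = 1 := by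
    rw [hEdef]
    rw [← Real.exp_add]
    norm_num
  have hut : u t * (Real.exp ((l/2)*t) * E t) = Real.exp ((l/2)*t) * g t := by
    simp only [hgdef]; ring
  rw [hEne, mul_one] at hut
  rw [hut, key]

lemma aux_u_check (l K c q : ℝ) (hq : q = (l+1)/4) (hc : c = q*K)
    (V b d : ℝ) (hV : 0 < V)
    (hODE : d / V + ((l-3)/4) * (b/V)^2 - l*(b/V) + K = 0) :
    (d * q) * V^(q-1) + (b*q) * (b*(q-1)*V^(q-2)) = l * (b * q * V^(q-1)) - c * V^q := by
  have h1 : V^(q-1) = V^q / V := by rw [Real.rpow_sub hV, Real.rpow_one]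
  have h2 : V^(q-2) = V^q / (V*V) := by
    rw [Real.rpow_sub hV, show (2:ℝ) = ((2:ℕ):ℝ) by norm_num, Real.rpow_natCast]
    ring_nf
  have hVne : V ≠ 0 := hV.ne'
  have hd : 4*V*d + (l-3)*b^2 - 4*l*b*V + 4*K*V^2 = 0 := by
    have h := hODE
    field_simp at h
    have h2 : V^2 * (4*V*d + (l-3)*b^2 - 4*l*b*V + 4*K*V^2) = V^2 * 0 := by
      rw [mul_zero]; linear_combination V^2 * h
    exact mul_left_cancel₀ (pow_ne_zero 2 hVne) h2
  subst hq hc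
  rw [h1, h2]
  field_simp
  linear_combination (l+1) * hd

lemma aux_ode_check (l c p : ℝ) (hl1 : l + 1 ≠ 0) (hp : p = 4/(l+1))
    (A B D : ℝ) (hA : 0 < A) (hD : D = l*B - c*A) :
    (D * p * A^(p-1) + (B*p) * (B*(p-1)*A^(p-2))) / A^p
      + ((l-3)/4) * ((B*p*A^(p-1)) / A^p)^2 - l * ((B*p*A^(p-1))/A^p) + c*p = 0 := by
  have h1 : A^(p-1) = A^p / A := by rw [Real.rpow_sub hA, Real.rpow_one]
  have h2 : A^(p-2) = A^p / (A*A) := by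
    rw [Real.rpow_sub hA, show (2:ℝ) = ((2:ℕ):ℝ) by norm_num, Real.rpow_natCast]
    ring_nf
  have hAp : A^p ≠ 0 := (Real.rpow_pos_of_pos hA p).ne'
  have hAne : A ≠ 0 := hA.ne'
  rw [h1, h2, hD]
  subst hp
  field_simp
  ring

lemma aux_dw (a θ c₁ c₂ : ℝ) (t : ℝ) :
    HasDerivAt (fun s => c₁ * Real.exp (a*s) * Real.cos (θ*s) + c₂ * Real.exp (a*s) * Real.sin (θ*s))
      ((c₁*a + c₂*θ) * Real.exp (a*t) * Real.cos (θ*t)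
        + (c₂*a - c₁*θ) * Real.exp (a*t) * Real.sin (θ*t)) t := by
  have h1 : HasDerivAt (fun s : ℝ => a*s) a t := by
    simpa using (hasDerivAt_id t).const_mul a
  have h2 : HasDerivAt (fun s : ℝ => θ*s) θ t := by
    simpa using (hasDerivAt_id t).const_mul θ
  have h := ((h1.exp.const_mul c₁).mul h2.cos).add ((h1.exp.const_mul c₂).mul h2.sin)
  refine h.congr_deriv ?_
  ring

theorem stmt_11 (l Sbar : ℝ) (hl : 0 < l) (hl3 : l ≠ 3)
    (hS : l / (l + 1) < Sbar) (v : ℝ → ℝ)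
    (hv : Differentiable ℝ v) (hv' : Differentiable ℝ (deriv v))
    (hvpos : ∀ t : ℝ, 0 < v t)
    (θ : ℝ) (hθ : θ = Real.sqrt (((l + 1) / l) * Sbar - 1) / 2) :
    (∀ t : ℝ, deriv (deriv v) t / v t + ((l - 3) / 4) * (deriv v t / v t) ^ 2
        - l * (deriv v t / v t) + (l - 1 + Sbar / l) = 0) ↔
    ∃ c₁ c₂ : ℝ,
      (∀ t : ℝ, 0 < c₁ * Real.exp ((l / 2) * t) * Real.cos (θ * t)
        + c₂ * Real.exp ((l / 2) * t) * Real.sin (θ * t)) ∧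
      ∀ t : ℝ, v t = (c₁ * Real.exp ((l / 2) * t) * Real.cos (θ * t)
        + c₂ * Real.exp ((l / 2) * t) * Real.sin (θ * t)) ^ ((4 : ℝ) / (l + 1)) := by
  have hlne : l ≠ 0 := hl.ne'
  have hl1 : (0:ℝ) < l + 1 := by linarith
  have hl1ne : l + 1 ≠ 0 := hl1.ne'
  have hlS : l < Sbar * (l + 1) := by rwa [div_lt_iff₀ hl1] at hS
  have hX : 0 < ((l + 1) / l) * Sbar - 1 := by
    rw [sub_pos, div_mul_eq_mul_div, lt_div_iff₀ hl]
    nlinarith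
  have hθpos : 0 < θ := by
    rw [hθ]
    have := Real.sqrt_pos.mpr hX
    linarith
  have hcθ2 : θ^2 = ((l+1)/4 * (l - 1 + Sbar/l)) - (l/2)^2 := by
    rw [hθ, div_pow, Real.sq_sqrt hX.le]
    field_simp
    ring
  constructor
  · intro hODE
    set q : ℝ := (l+1)/4 with hqdef
    set cC : ℝ := (l+1)/4 * (l - 1 + Sbar/l) with hcdef
    have hcq : cC = q * (l - 1 + Sbar/l) := by rw [hcdef, hqdef]
    have hvne : ∀ s : ℝ, v s ≠ 0 := fun s => (hvpos s).ne'
    set u : ℝ → ℝ := fun s => v s ^ q with hudef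
    set u1 : ℝ → ℝ := fun s => deriv v s * q * v s ^ (q-1) with hu1def
    have hud : ∀ s, HasDerivAt u (u1 s) s :=
      fun s => ((hv s).hasDerivAt).rpow_const (Or.inl (hvne s))
    have hu1d : ∀ s, HasDerivAt u1 (l * u1 s - cC * u s) s := by
      intro s
      have hh := (((hv' s).hasDerivAt).mul_const q).mul
        (((hv s).hasDerivAt).rpow_const (p := q - 1) (Or.inl (hvne s)))
      rw [show q - 1 - 1 = q - 2 by ring] at hh
      have key := aux_u_check l (l - 1 + Sbar/l) cC q hqdef hcq (v s) (deriv v s)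
        (deriv (deriv v) s) (hvpos s) (hODE s)
      rw [key] at hh
      exact hh
    have hmain := fun s => aux_forward l cC θ hθpos.ne' hcθ2 u u1 hud hu1d s
    refine ⟨u 0, (u1 0 - (l/2) * u 0)/θ, ?_, ?_⟩
    · intro t
      have hexpr : u 0 * Real.exp ((l/2)*t) * Real.cos (θ*t)
          + (u1 0 - (l/2)*u 0)/θ * Real.exp ((l/2)*t) * Real.sin (θ*t) = u t := by
        rw [hmain t]; ring
      rw [hexpr]
      exact Real.rpow_pos_of_pos (hvpos t) q
    · intro t
      have hexpr : u 0 * Real.exp ((l/2)*t) * Real.cos (θ*t)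
          + (u1 0 - (l/2)*u 0)/θ * Real.exp ((l/2)*t) * Real.sin (θ*t) = u t := by
        rw [hmain t]; ring
      rw [hexpr]
      simp only [hudef]
      rw [← Real.rpow_mul (hvpos t).le]
      rw [show q * ((4:ℝ)/(l+1)) = 1 by rw [hqdef]; field_simp, Real.rpow_one]
  · rintro ⟨c₁, c₂, hwpos, hveq⟩ t
    set cC : ℝ := (l+1)/4 * (l - 1 + Sbar/l) with hcdef
    have Dw : ∀ s : ℝ, HasDerivAt
        (fun r => c₁ * Real.exp ((l/2)*r) * Real.cos (θ*r) + c₂ * Real.exp ((l/2)*r) * Real.sin (θ*r))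
        ((c₁*(l/2) + c₂*θ) * Real.exp ((l/2)*s) * Real.cos (θ*s)
          + (c₂*(l/2) - c₁*θ) * Real.exp ((l/2)*s) * Real.sin (θ*s)) s :=
      fun s => aux_dw (l/2) θ c₁ c₂ s
    have Dw1 : ∀ s : ℝ, HasDerivAt
        (fun r => (c₁*(l/2) + c₂*θ) * Real.exp ((l/2)*r) * Real.cos (θ*r)
          + (c₂*(l/2) - c₁*θ) * Real.exp ((l/2)*r) * Real.sin (θ*r))
        (((c₁*(l/2) + c₂*θ)*(l/2) + (c₂*(l/2) - c₁*θ)*θ) * Real.exp ((l/2)*s) * Real.cos (θ*s)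
          + ((c₂*(l/2) - c₁*θ)*(l/2) - (c₁*(l/2) + c₂*θ)*θ) * Real.exp ((l/2)*s) * Real.sin (θ*s)) s :=
      fun s => aux_dw (l/2) θ (c₁*(l/2) + c₂*θ) (c₂*(l/2) - c₁*θ) s
    have hwne : ∀ s : ℝ, c₁ * Real.exp ((l/2)*s) * Real.cos (θ*s)
        + c₂ * Real.exp ((l/2)*s) * Real.sin (θ*s) ≠ 0 := fun s => (hwpos s).ne'
    have hveqf : v = fun r => (c₁ * Real.exp ((l/2)*r) * Real.cos (θ*r)
        + c₂ * Real.exp ((l/2)*r) * Real.sin (θ*r)) ^ ((4:ℝ)/(l+1)) := funext hveq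
    have hvd : ∀ s : ℝ, HasDerivAt v
        (((c₁*(l/2) + c₂*θ) * Real.exp ((l/2)*s) * Real.cos (θ*s)
          + (c₂*(l/2) - c₁*θ) * Real.exp ((l/2)*s) * Real.sin (θ*s)) * ((4:ℝ)/(l+1))
          * (c₁ * Real.exp ((l/2)*s) * Real.cos (θ*s)
            + c₂ * Real.exp ((l/2)*s) * Real.sin (θ*s)) ^ ((4:ℝ)/(l+1) - 1)) s := by
      intro s
      rw [hveqf]
      exact (Dw s).rpow_const (Or.inl (hwne s))
    have hdv : deriv v = fun s =>
        ((c₁*(l/2) + c₂*θ) * Real.exp ((l/2)*s) * Real.cos (θ*s)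
          + (c₂*(l/2) - c₁*θ) * Real.exp ((l/2)*s) * Real.sin (θ*s)) * ((4:ℝ)/(l+1))
          * (c₁ * Real.exp ((l/2)*s) * Real.cos (θ*s)
            + c₂ * Real.exp ((l/2)*s) * Real.sin (θ*s)) ^ ((4:ℝ)/(l+1) - 1) :=
      funext fun s => (hvd s).deriv
    have hdd : HasDerivAt (deriv v)
        (((((c₁*(l/2) + c₂*θ)*(l/2) + (c₂*(l/2) - c₁*θ)*θ) * Real.exp ((l/2)*t) * Real.cos (θ*t)
          + ((c₂*(l/2) - c₁*θ)*(l/2) - (c₁*(l/2) + c₂*θ)*θ) * Real.exp ((l/2)*t) * Real.sin (θ*t))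
            * ((4:ℝ)/(l+1))) * ((c₁ * Real.exp ((l/2)*t) * Real.cos (θ*t)
              + c₂ * Real.exp ((l/2)*t) * Real.sin (θ*t)) ^ ((4:ℝ)/(l+1) - 1))
          + (((c₁*(l/2) + c₂*θ) * Real.exp ((l/2)*t) * Real.cos (θ*t)
            + (c₂*(l/2) - c₁*θ) * Real.exp ((l/2)*t) * Real.sin (θ*t)) * ((4:ℝ)/(l+1)))
            * (((c₁*(l/2) + c₂*θ) * Real.exp ((l/2)*t) * Real.cos (θ*t)
              + (c₂*(l/2) - c₁*θ) * Real.exp ((l/2)*t) * Real.sin (θ*t)) * ((4:ℝ)/(l+1) - 1)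
              * (c₁ * Real.exp ((l/2)*t) * Real.cos (θ*t)
                + c₂ * Real.exp ((l/2)*t) * Real.sin (θ*t)) ^ ((4:ℝ)/(l+1) - 1 - 1))) t := by
      rw [hdv]
      exact ((Dw1 t).mul_const ((4:ℝ)/(l+1))).mul
        ((Dw t).rpow_const (p := (4:ℝ)/(l+1) - 1) (Or.inl (hwne t)))
    have hDkey : ((c₁*(l/2) + c₂*θ)*(l/2) + (c₂*(l/2) - c₁*θ)*θ) * Real.exp ((l/2)*t) * Real.cos (θ*t)
          + ((c₂*(l/2) - c₁*θ)*(l/2) - (c₁*(l/2) + c₂*θ)*θ) * Real.exp ((l/2)*t) * Real.sin (θ*t)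
        = l * ((c₁*(l/2) + c₂*θ) * Real.exp ((l/2)*t) * Real.cos (θ*t)
            + (c₂*(l/2) - c₁*θ) * Real.exp ((l/2)*t) * Real.sin (θ*t))
          - cC * (c₁ * Real.exp ((l/2)*t) * Real.cos (θ*t)
            + c₂ * Real.exp ((l/2)*t) * Real.sin (θ*t)) := by
      rw [hcdef]
      linear_combination (-(c₁ * Real.exp ((l/2)*t) * Real.cos (θ*t)
        + c₂ * Real.exp ((l/2)*t) * Real.sin (θ*t))) * hcθ2
    have hKp : l - 1 + Sbar / l = cC * ((4:ℝ)/(l+1)) := by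
      rw [hcdef]; field_simp
    rw [hveq t, hdd.deriv, (hvd t).deriv, hKp]
    rw [show (4:ℝ)/(l+1) - 1 - 1 = (4:ℝ)/(l+1) - 2 by ring]
    exact aux_ode_check l cC ((4:ℝ)/(l+1)) hl1ne rfl
      (c₁ * Real.exp ((l/2)*t) * Real.cos (θ*t) + c₂ * Real.exp ((l/2)*t) * Real.sin (θ*t))
      ((c₁*(l/2) + c₂*θ) * Real.exp ((l/2)*t) * Real.cos (θ*t)
        + (c₂*(l/2) - c₁*θ) * Real.exp ((l/2)*t) * Real.sin (θ*t))
      (((c₁*(l/2) + c₂*θ)*(l/2) + (c₂*(l/2) - c₁*θ)*θ) * Real.exp ((l/2)*t) * Real.cos (θ*t)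
        + ((c₂*(l/2) - c₁*θ)*(l/2) - (c₁*(l/2) + c₂*θ)*θ) * Real.exp ((l/2)*t) * Real.sin (θ*t))
      (hwpos t) hDkey
end

section
/- Let l ≥ 2 be an integer, let λ, λ_F ∈ ℝ, and let f : ℝ → ℝ be twice differentiable with f(t) > 0 for all t. Then the two equations f''(t) = f'(t) - (λ/l)·f(t) and λ_F/(1-l) + f'(t)² + (1 + λ/l)·f(t)² - 2·f(t)·f'(t) = 0 hold for all t ∈ ℝ if and only if λ = 0 and there exist constants c₁, c₂ ∈ ℝ such that f(t) = c₁·eᵗ + c₂ for all t ∈ ℝ and λ_F = (l-1)·c₂². -/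
theorem stmt_12 (l : ℕ) (hl : 2 ≤ l) (lam lamF : ℝ) (f : ℝ → ℝ)
    (hf : Differentiable ℝ f) (hf' : Differentiable ℝ (deriv f))
    (hfpos : ∀ t : ℝ, 0 < f t) :
    ((∀ t : ℝ, deriv (deriv f) t = deriv f t - (lam / l) * f t) ∧
     (∀ t : ℝ, lamF / (1 - (l : ℝ)) + (deriv f t) ^ 2
        + (1 + lam / l) * f t ^ 2 - 2 * f t * deriv f t = 0)) ↔
    (lam = 0 ∧ ∃ c₁ c₂ : ℝ, (∀ t : ℝ, f t = c₁ * Real.exp t + c₂) ∧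
      lamF = ((l : ℝ) - 1) * c₂ ^ 2) := by
  have hl2 : (2 : ℝ) ≤ (l : ℝ) := by exact_mod_cast hl
  have hl0 : (l : ℝ) ≠ 0 := by linarith
  have hl1 : (1 : ℝ) - (l : ℝ) ≠ 0 := by intro h; linarith
  constructor
  · rintro ⟨h1, h2⟩
    have hfd : ∀ t, HasDerivAt f (deriv f t) t := fun t => (hf t).hasDerivAt
    have hfd' : ∀ t, HasDerivAt (deriv f) (deriv (deriv f) t) t :=
      fun t => (hf' t).hasDerivAt
    -- λ = 0
    have hlam : lam = 0 := by
      set t : ℝ := 0 with ht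
      have A := (hfd' t).pow 2
      have B := ((hfd t).pow 2).const_mul (1 + lam / l)
      have C := ((hfd t).const_mul 2).mul (hfd' t)
      have hg := (A.add B).sub C
      have hgc : (fun s => deriv f s ^ 2 + (1 + lam / l) * f s ^ 2
          - 2 * f s * deriv f s) = fun _ => -(lamF / (1 - (l : ℝ))) := by
        funext s
        have := h2 s
        linarith
      have hz : HasDerivAt (fun s => deriv f s ^ 2 + (1 + lam / l) * f s ^ 2
          - 2 * f s * deriv f s) 0 t := by
        rw [hgc]; exact hasDerivAt_const _ _
      have hD := hz.unique hg
      rw [h1 t] at hD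
      have hft := hfpos t
      have hkey : lam / l * f t ^ 2 = 0 := by nlinarith [hD, sq_nonneg (f t)]
      have : lam / l = 0 := by
        have h2' : f t ^ 2 ≠ 0 := by positivity
        exact (mul_eq_zero.mp hkey).resolve_right h2'
      field_simp at this
      rw [ht]; simpa using this
    refine ⟨hlam, deriv f 0, f 0 - deriv f 0, ?_, ?_⟩
    · -- f t = c₁ eᵗ + c₂
      have hff : ∀ t, deriv (deriv f) t = deriv f t := by
        intro t; rw [h1 t, hlam]; simp
      -- deriv f t * exp (-t) is constant
      have hh : ∀ t, HasDerivAt (fun s => deriv f s * Real.exp (-s)) 0 t := by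
        intro t
        have he : HasDerivAt (fun s : ℝ => Real.exp (-s)) (-Real.exp (-t)) t := by
          have := (Real.hasDerivAt_exp (-t)).comp t (hasDerivAt_neg t)
          simp only [mul_neg, mul_one] at this
          exact this
        have := (hfd' t).mul he
        rw [hff t] at this
        rw [show deriv f t * Real.exp (-t) + deriv f t * -Real.exp (-t) = 0 by ring] at this
        exact this
      have hc1 : ∀ t, deriv f t * Real.exp (-t) = deriv f 0 := by
        intro t
        have := is_const_of_deriv_eq_zero (f := fun s => deriv f s * Real.exp (-s))
          (fun s => (hh s).differentiableAt) (fun s => (hh s).deriv) t 0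
        simpa using this
      have hd1 : ∀ t, deriv f t = deriv f 0 * Real.exp t := by
        intro t
        have hpe : Real.exp (-t) * Real.exp t = 1 := by
          rw [← Real.exp_add]; simp
        calc deriv f t = deriv f t * (Real.exp (-t) * Real.exp t) := by rw [hpe]; ring
          _ = deriv f t * Real.exp (-t) * Real.exp t := by ring
          _ = deriv f 0 * Real.exp t := by rw [hc1 t]
      have hk : ∀ t, HasDerivAt (fun s => f s - deriv f 0 * Real.exp s) 0 t := by
        intro t
        have := (hfd t).sub ((Real.hasDerivAt_exp t).const_mul (deriv f 0))
        rw [hd1 t, sub_self] at this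
        exact this
      intro t
      have := is_const_of_deriv_eq_zero (f := fun s => f s - deriv f 0 * Real.exp s)
        (fun s => (hk s).differentiableAt) (fun s => (hk s).deriv) t 0
      simp only [Real.exp_zero, mul_one] at this
      linarith
    · -- λ_F
      have := h2 0
      rw [hlam] at this
      have h0 : lamF / (1 - (l : ℝ)) + (f 0 - deriv f 0) ^ 2 = 0 := by
        field_simp at this ⊢
        nlinarith [this]
      have : lamF = -(1 - (l : ℝ)) * (f 0 - deriv f 0) ^ 2 := by
        field_simp at h0
        linarith
      rw [this]; ring
  · rintro ⟨hlam, c₁, c₂, hfe, hlamF⟩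
    have hfeq : f = fun t => c₁ * Real.exp t + c₂ := funext hfe
    subst hfeq
    have hd : deriv (fun t => c₁ * Real.exp t + c₂) = fun t => c₁ * Real.exp t := by
      funext t
      exact (((Real.hasDerivAt_exp t).const_mul c₁).add_const c₂).deriv
    rw [hd]
    have hd2 : deriv (fun t => c₁ * Real.exp t) = fun t => c₁ * Real.exp t := by
      funext t
      exact ((Real.hasDerivAt_exp t).const_mul c₁).deriv
    constructor
    · intro t; rw [hd2, hlam]; simp
    · intro t
      rw [hlamF]
      have : ((l : ℝ) - 1) * c₂ ^ 2 / (1 - (l : ℝ)) = -c₂ ^ 2 := by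
        field_simp
        ring
      rw [hlam, this]
      ring
end

section
/- Let p₁, p₂ ∈ ℝ with p₁ ≠ p₂, and set ζ = p₁ + 2p₂ and η = p₁² + 2p₂². Let λ, λ₂ ∈ ℝ and let φ : ℝ → ℝ be twice differentiable with φ(t) > 0 for all t. Then the three equations (i) ζ·(φ'(t) - φ''(t))/φ(t) - (η - ζ)·(φ'(t)/φ(t))² = λ, (ii) -p₁·φ''(t)/φ(t) - (ζ-1)·p₁·(φ'(t)/φ(t))² + (ζ + 2p₁)·φ'(t)/φ(t) = λ + 2, and (iii) λ₂/φ(t)^{2p₂} - p₂·φ''(t)/φ(t) - (ζ-1)·p₂·(φ'(t)/φ(t))² + (ζ + 2p₂)·φ'(t)/φ(t) = λ + 2 hold for all t ∈ ℝ if and only if λ = 0 and there exists c₀ > 0 such that one of the following holds: (1) p₂ = 0, p₁ ≠ 0, λ₂ = 1, and φ(t) = c₀·exp(t/p₁) for all t; (2) p₁ = 0, p₂ ≠ 0, λ₂ = 0, and φ(t) = c₀·exp(t/p₂) for all t; (3) p₁ = 4p₂, p₂ ≠ 0, λ₂ = 0, and φ(t) = c₀·exp(t/(3p₂)) for all t.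 -/
private lemma quad_const {a b c : ℝ} (hab : ¬(a = 0 ∧ b = 0)) {U : ℝ → ℝ}
    (hU : Continuous U) (hq : ∀ t, a * U t ^ 2 + b * U t = c) (s t : ℝ) :
    U s = U t := by
  have key : ∀ x y : ℝ, U x < U y → False := by
    intro x y hxy
    obtain ⟨r, hr⟩ := intermediate_value_univ x y hU
      (Set.mem_Icc.mpr ⟨by linarith, by linarith⟩ : (U x + U y)/2 ∈ Set.Icc (U x) (U y))
    have e1 := hq x; have e2 := hq y; have e3 := hq r
    rw [hr] at e3
    have h1 : a * (U x + (U x + U y)/2) + b = 0 := by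
      rcases mul_eq_zero.mp (show (U x - (U x + U y)/2) * (a * (U x + (U x + U y)/2) + b) = 0 by
        linear_combination e1 - e3) with h | h
      · exact absurd h (sub_ne_zero.mpr (by linarith))
      · exact h
    have h2 : a * (U y + (U x + U y)/2) + b = 0 := by
      rcases mul_eq_zero.mp (show (U y - (U x + U y)/2) * (a * (U y + (U x + U y)/2) + b) = 0 by
        linear_combination e2 - e3) with h | h
      · exact absurd h (sub_ne_zero.mpr (by linarith))
      · exact h
    have ha : a = 0 := by
      rcases mul_eq_zero.mp (show a * (U x - U y) = 0 by linear_combination h1 - h2) with h | h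
      · exact h
      · exact absurd h (sub_ne_zero.mpr (ne_of_lt hxy))
    exact hab ⟨ha, by simpa [ha] using h1⟩
  rcases lt_trichotomy (U s) (U t) with h | h | h
  · exact (key s t h).elim
  · exact h
  · exact (key t s h).elim

private lemma deriv_exp_eq (c₀ a : ℝ) (φ : ℝ → ℝ) (hφe : ∀ t, φ t = c₀ * Real.exp (t / a)) :
    (∀ t, deriv φ t = (1/a) * φ t) ∧ (∀ t, deriv (deriv φ) t = (1/a)^2 * φ t) := by
  have hφf : φ = fun t => c₀ * Real.exp (t / a) := funext hφe
  subst hφf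
  have hd : ∀ t : ℝ, HasDerivAt (fun t => c₀ * Real.exp (t/a)) ((1/a) * (c₀ * Real.exp (t/a))) t := by
    intro t
    have h := (((hasDerivAt_id t).div_const a).exp).const_mul c₀
    exact h.congr_deriv (by simp only [id]; ring)
  have hd1 : deriv (fun t => c₀ * Real.exp (t/a)) = fun t => (1/a) * (c₀ * Real.exp (t/a)) :=
    funext fun t => (hd t).deriv
  refine ⟨fun t => by rw [hd1], fun t => ?_⟩
  rw [hd1]
  have h2 : HasDerivAt (fun t => (1/a) * (c₀ * Real.exp (t/a)))
      ((1/a)^2 * (c₀ * Real.exp (t/a))) t := by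
    have := (hd t).const_mul (1/a)
    exact this.congr_deriv (by ring)
  simpa using h2.deriv

set_option maxHeartbeats 1600000 in
theorem stmt_13 (p₁ p₂ : ℝ) (hp : p₁ ≠ p₂) (ζ η : ℝ)
    (hζ : ζ = p₁ + 2 * p₂) (hη : η = p₁ ^ 2 + 2 * p₂ ^ 2)
    (lam lam₂ : ℝ) (φ : ℝ → ℝ)
    (hφ : Differentiable ℝ φ) (hφ' : Differentiable ℝ (deriv φ))
    (hφpos : ∀ t : ℝ, 0 < φ t) :
    ((∀ t : ℝ, ζ * (deriv φ t - deriv (deriv φ) t) / φ t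
        - (η - ζ) * (deriv φ t / φ t) ^ 2 = lam) ∧
     (∀ t : ℝ, -p₁ * deriv (deriv φ) t / φ t
        - (ζ - 1) * p₁ * (deriv φ t / φ t) ^ 2
        + (ζ + 2 * p₁) * (deriv φ t / φ t) = lam + 2) ∧
     (∀ t : ℝ, lam₂ / φ t ^ (2 * p₂) - p₂ * deriv (deriv φ) t / φ t
        - (ζ - 1) * p₂ * (deriv φ t / φ t) ^ 2
        + (ζ + 2 * p₂) * (deriv φ t / φ t) = lam + 2)) ↔
    (lam = 0 ∧ ∃ c₀ : ℝ, 0 < c₀ ∧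
      ((p₂ = 0 ∧ p₁ ≠ 0 ∧ lam₂ = 1 ∧ ∀ t : ℝ, φ t = c₀ * Real.exp (t / p₁)) ∨
       (p₁ = 0 ∧ p₂ ≠ 0 ∧ lam₂ = 0 ∧ ∀ t : ℝ, φ t = c₀ * Real.exp (t / p₂)) ∨
       (p₁ = 4 * p₂ ∧ p₂ ≠ 0 ∧ lam₂ = 0 ∧ ∀ t : ℝ, φ t = c₀ * Real.exp (t / (3 * p₂))))) := by
  subst hζ hη
  have hφne : ∀ t, φ t ≠ 0 := fun t => (hφpos t).ne'
  constructor
  · rintro ⟨h1, h2, h3⟩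
    -- the quadratic satisfied by U = φ'/φ
    have hquad : ∀ t, (p₁ * ((p₁^2+2*p₂^2) - (p₁+2*p₂)^2)) * (deriv φ t / φ t)^2
        + ((p₁+2*p₂)*((p₁+2*p₂)+p₁)) * (deriv φ t / φ t)
        = ((p₁+2*p₂)-p₁)*lam + 2*(p₁+2*p₂) := by
      intro t
      have e1 := h1 t; have e2 := h2 t
      have hf := hφne t
      have E1 : (p₁+2*p₂)*(deriv φ t - deriv (deriv φ) t)*(φ t)
          - ((p₁^2+2*p₂^2)-(p₁+2*p₂))*(deriv φ t)^2 = lam*(φ t)^2 := by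
        rw [← e1]; field_simp
      have E2 : -p₁*(deriv (deriv φ) t)*(φ t) - ((p₁+2*p₂)-1)*p₁*(deriv φ t)^2
          + ((p₁+2*p₂)+2*p₁)*(deriv φ t)*(φ t) = (lam+2)*(φ t)^2 := by
        rw [← e2]; field_simp
      have key : (p₁ * ((p₁^2+2*p₂^2) - (p₁+2*p₂)^2)) * (deriv φ t)^2
          + ((p₁+2*p₂)*((p₁+2*p₂)+p₁)) * ((deriv φ t)*(φ t))
          = (((p₁+2*p₂)-p₁)*lam + 2*(p₁+2*p₂))*(φ t)^2 := by
        linear_combination (p₁+2*p₂) * E2 - p₁ * E1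
      have hd : deriv φ t = (deriv φ t / φ t) * φ t := by field_simp
      apply mul_right_cancel₀ (pow_ne_zero 2 hf)
      rw [hd] at key
      linear_combination key
    -- nondegeneracy of the quadratic
    have hab : ¬(p₁ * ((p₁^2+2*p₂^2) - (p₁+2*p₂)^2) = 0
        ∧ (p₁+2*p₂)*((p₁+2*p₂)+p₁) = 0) := by
      rintro ⟨ha, hb⟩
      rcases mul_eq_zero.mp hb with h | h
      · have hp1 : p₁ = -2*p₂ := by linarith
        have h3' : p₂^3 = 0 := by nlinarith [ha, hp1]
        have hp20 : p₂ = 0 := pow_eq_zero_iff (n := 3) (by norm_num) |>.mp h3'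
        exact hp (by rw [hp1, hp20]; ring)
      · have hp1 : p₁ = -p₂ := by linarith
        have h3' : p₂^3 = 0 := by nlinarith [ha, hp1]
        have hp20 : p₂ = 0 := pow_eq_zero_iff (n := 3) (by norm_num) |>.mp h3'
        exact hp (by rw [hp1, hp20]; ring)
    have hUc : Continuous (fun t => deriv φ t / φ t) :=
      hφ'.continuous.div hφ.continuous hφne
    have hconst := quad_const hab hUc hquad
    obtain ⟨c, hder⟩ : ∃ c : ℝ, ∀ t, deriv φ t = c * φ t := by
      refine ⟨deriv φ 0 / φ 0, fun t => ?_⟩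
      rw [← hconst t 0, div_mul_cancel₀ _ (hφne t)]
    have hder2 : ∀ t, deriv (deriv φ) t = c^2 * φ t := by
      have hd : deriv φ = fun t => c * φ t := funext hder
      intro t
      rw [hd, deriv_const_mul _ (hφ t), hder t]
      ring
    -- exponential form
    have hexp : ∀ t, φ t = φ 0 * Real.exp (c * t) := by
      have hg : ∀ t : ℝ, HasDerivAt (fun t => φ t * Real.exp (-(c*t))) 0 t := by
        intro t
        have hφd : HasDerivAt φ (c * φ t) t := hder t ▸ (hφ t).hasDerivAt
        have hn : HasDerivAt (fun t : ℝ => -(c*t)) (-c) t := by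
          exact ((hasDerivAt_id t).const_mul c).neg.congr_deriv (by ring)
        have := hφd.mul hn.exp
        exact this.congr_deriv (by ring)
      intro t
      have hgc : φ t * Real.exp (-(c*t)) = φ 0 * Real.exp (-(c*0)) :=
        is_const_of_deriv_eq_zero (fun s => (hg s).differentiableAt)
          (fun s => (hg s).deriv) t 0
      have h0 : φ t * Real.exp (-(c*t)) = φ 0 := by simpa using hgc
      rw [← h0, Real.exp_neg]
      field_simp
    -- constant forms of the equations
    have E1 : (p₁+2*p₂) * c - (p₁^2+2*p₂^2) * c^2 = lam := by
      have h := h1 0; rw [hder 0, hder2 0] at h; rw [← h]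
      have := hφne 0; field_simp; ring
    have E2 : -((p₁+2*p₂)*p₁*c^2) + ((p₁+2*p₂) + 2*p₁)*c = lam + 2 := by
      have h := h2 0; rw [hder 0, hder2 0] at h; rw [← h]
      have := hφne 0; field_simp; ring
    have E3 : ∀ t, lam₂ / φ t ^ (2*p₂)
        + (-((p₁+2*p₂)*p₂*c^2) + ((p₁+2*p₂)+2*p₂)*c) = lam + 2 := by
      intro t
      have h := h3 t; rw [hder t, hder2 t] at h; rw [← h]
      have hR := (Real.rpow_pos_of_pos (hφpos t) (2*p₂)).ne'
      have := hφne t; field_simp; ring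
    -- case analysis
    by_cases hp2 : p₂ = 0
    · -- case (1)
      subst hp2
      have hp1 : p₁ ≠ 0 := by simpa using hp
      have hc1 : p₁ * c = 1 := by linear_combination E2 / 2 - E1 / 2
      have hlam0 : lam = 0 := by linear_combination -E1 - (p₁*c)*hc1
      have hl2 : lam₂ = 1 := by
        have h := E3 0
        norm_num [Real.rpow_zero] at h
        linear_combination h - hc1 + hlam0
      refine ⟨hlam0, φ 0, hφpos 0, Or.inl ⟨rfl, hp1, hl2, fun t => ?_⟩⟩
      rw [hexp t, show c * t = t / p₁ by field_simp; linear_combination t * hc1]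
    · -- p₂ ≠ 0
      by_cases hc0 : c = 0
      · exfalso
        subst hc0
        norm_num at E1 E2
        linarith
      · have hl2 : lam₂ = 0 := by
          by_contra hl2
          have q0 := E3 0
          have q1 := E3 1
          have heq : lam₂ / φ 0 ^ (2*p₂) = lam₂ / φ 1 ^ (2*p₂) := by linarith
          have R0 := Real.rpow_pos_of_pos (hφpos 0) (2*p₂)
          have R1 := Real.rpow_pos_of_pos (hφpos 1) (2*p₂)
          have hmul := (div_eq_div_iff R0.ne' R1.ne').mp heq
          have hpow : φ 0 ^ (2*p₂) = φ 1 ^ (2*p₂) := by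
            have := mul_left_cancel₀ hl2
              (by linarith [hmul] : lam₂ * φ 1 ^ (2*p₂) = lam₂ * φ 0 ^ (2*p₂))
            linarith
          have hlog : (2*p₂) * Real.log (φ 0) = (2*p₂) * Real.log (φ 1) := by
            rw [← Real.log_rpow (hφpos 0), ← Real.log_rpow (hφpos 1), hpow]
          have hll : Real.log (φ 0) = Real.log (φ 1) :=
            mul_left_cancel₀ (by simpa using (mul_ne_zero two_ne_zero hp2)) hlog
          have hφeq : φ 0 = φ 1 := by
            rw [← Real.exp_log (hφpos 0), ← Real.exp_log (hφpos 1), hll]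
          have h1' : φ 1 = φ 0 * Real.exp c := by simpa using hexp 1
          have : Real.exp c = 1 := by
            have : φ 0 * Real.exp c = φ 0 * 1 := by rw [mul_one, ← h1', ← hφeq]
            exact mul_left_cancel₀ (hφne 0) this
          exact hc0 (Real.exp_eq_exp.mp (by rwa [Real.exp_zero]))
        have E3v : -((p₁+2*p₂)*p₂*c^2) + ((p₁+2*p₂)+2*p₂)*c = lam + 2 := by
          have h := E3 0
          rw [hl2, zero_div] at h
          linarith
        have hζc : (p₁+2*p₂) * c = 2 := by
          have key : (p₁ - p₂) * (c * ((p₁+2*p₂) * c - 2)) = 0 := by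
            linear_combination E3v - E2
          rcases mul_eq_zero.mp key with h | h
          · exact absurd h (sub_ne_zero.mpr hp)
          · rcases mul_eq_zero.mp h with h' | h'
            · exact absurd h' hc0
            · linarith
        have hlam0 : lam = 0 := by linear_combination -E2 + (1 - p₁*c)*hζc
        have hkey : (p₁ * (p₁ - 4*p₂)) * c^2 = 0 := by
          linear_combination (-2)*E1 - ((p₁+2*p₂)*c)*hζc - 2*hlam0
        rcases mul_eq_zero.mp hkey with h | h
        · rcases mul_eq_zero.mp h with h' | h'
          · -- p₁ = 0, case (2)
            have hpc : p₂ * c = 1 := by rw [h'] at hζc; linarith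
            refine ⟨hlam0, φ 0, hφpos 0, Or.inr (Or.inl ⟨h', hp2, hl2, fun t => ?_⟩)⟩
            rw [hexp t, show c * t = t / p₂ by field_simp; linear_combination t * hpc]
          · -- p₁ = 4 p₂, case (3)
            have hp14 : p₁ = 4 * p₂ := by linarith
            have hpc : 3 * p₂ * c = 1 := by rw [hp14] at hζc; linarith [hζc]
            have h3' : (3:ℝ) * p₂ ≠ 0 := by positivity
            refine ⟨hlam0, φ 0, hφpos 0, Or.inr (Or.inr ⟨hp14, hp2, hl2, fun t => ?_⟩)⟩
            rw [hexp t, show c * t = t / (3*p₂) by field_simp; linear_combination t * hpc]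
        · exact absurd (pow_eq_zero_iff (n := 2) (by norm_num) |>.mp h) hc0
  · rintro ⟨hlam, c₀, hc₀, hcase⟩
    subst hlam
    rcases hcase with ⟨hp2, hp1, hl2, hφe⟩ | ⟨hp1, hp2, hl2, hφe⟩ | ⟨hp14, hp2, hl2, hφe⟩
    · subst hp2 hl2
      obtain ⟨hd1, hd2⟩ := deriv_exp_eq c₀ p₁ φ hφe
      refine ⟨fun t => ?_, fun t => ?_, fun t => ?_⟩ <;>
      · have hx := (hφpos t).ne'
        rw [hd1 t, hd2 t]
        norm_num [Real.rpow_zero]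
        field_simp
        ring
    · subst hp1 hl2
      obtain ⟨hd1, hd2⟩ := deriv_exp_eq c₀ p₂ φ hφe
      refine ⟨fun t => ?_, fun t => ?_, fun t => ?_⟩ <;>
      · have hx := (hφpos t).ne'
        rw [hd1 t, hd2 t]
        norm_num
        field_simp
        all_goals ring
    · subst hp14 hl2
      obtain ⟨hd1, hd2⟩ := deriv_exp_eq c₀ (3*p₂) φ hφe
      have h3 : (3:ℝ) * p₂ ≠ 0 := by positivity
      refine ⟨fun t => ?_, fun t => ?_, fun t => ?_⟩ <;>
      · have hx := (hφpos t).ne'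
        rw [hd1 t, hd2 t]
        norm_num
        field_simp
        ring
end

section
/- Let p₁, p₂, p₃ ∈ ℝ such that p_i ≠ p_j for some pair i ≠ j, and set ζ = p₁ + p₂ + p₃ and η = p₁² + p₂² + p₃². Let λ ∈ ℝ and let φ : ℝ → ℝ be twice differentiable with φ(t) > 0 for all t. Then the four equations (i) ζ·(φ'(t) - φ''(t))/φ(t) - (η - ζ)·(φ'(t)/φ(t))² = λ and, for each i ∈ {1,2,3}, -p_i·[φ''(t)/φ(t) + (ζ-1)·(φ'(t)/φ(t))² - 2·φ'(t)/φ(t)] + ζ·φ'(t)/φ(t) = λ + 2, hold for all t ∈ ℝ if and only if λ = 0, 2η = ζ², and there exists c₀ > 0 such that φ(t) = c₀·exp(2t/ζ) for all t ∈ ℝ. -/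
lemma exp_ode_aux (φ : ℝ → ℝ) (hφ : Differentiable ℝ φ) (k : ℝ)
    (h : ∀ t, deriv φ t = k * φ t) (t : ℝ) : φ t = φ 0 * Real.exp (k * t) := by
  set g : ℝ → ℝ := fun s => φ s * Real.exp (-k * s) with hg
  have hgd : ∀ s, HasDerivAt g 0 s := by
    intro s
    have h1 : HasDerivAt φ (k * φ s) s := h s ▸ (hφ s).hasDerivAt
    have h2 : HasDerivAt (fun u : ℝ => Real.exp (-k * u)) (-k * Real.exp (-k * s)) s := by
      have := (Real.hasDerivAt_exp (-k * s)).comp s ((hasDerivAt_id s).const_mul (-k))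
      simpa [Function.comp_def, mul_comm] using this
    have := h1.mul h2
    refine this.congr_deriv ?_
    ring
  have hconst : ∀ s, g s = g 0 := fun s =>
    is_const_of_deriv_eq_zero (fun x => (hgd x).differentiableAt) (fun x => (hgd x).deriv) s 0
  have := hconst t
  simp only [hg, mul_zero, neg_mul, Real.exp_zero, mul_one, neg_zero] at this
  have hexp : Real.exp (-(k * t)) ≠ 0 := Real.exp_ne_zero _
  field_simp [Real.exp_neg] at this
  rw [← this, mul_assoc, ← Real.exp_add]; simp

theorem stmt_14 (p₁ p₂ p₃ : ℝ) (hp : p₁ ≠ p₂ ∨ p₁ ≠ p₃ ∨ p₂ ≠ p₃) (ζ η : ℝ)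
    (hζ : ζ = p₁ + p₂ + p₃) (hη : η = p₁ ^ 2 + p₂ ^ 2 + p₃ ^ 2)
    (lam : ℝ) (φ : ℝ → ℝ)
    (hφ : Differentiable ℝ φ) (hφ' : Differentiable ℝ (deriv φ))
    (hφpos : ∀ t : ℝ, 0 < φ t) :
    ((∀ t : ℝ, ζ * (deriv φ t - deriv (deriv φ) t) / φ t
        - (η - ζ) * (deriv φ t / φ t) ^ 2 = lam) ∧
     (∀ t : ℝ, -p₁ * (deriv (deriv φ) t / φ t + (ζ - 1) * (deriv φ t / φ t) ^ 2
        - 2 * (deriv φ t / φ t)) + ζ * (deriv φ t / φ t) = lam + 2) ∧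
     (∀ t : ℝ, -p₂ * (deriv (deriv φ) t / φ t + (ζ - 1) * (deriv φ t / φ t) ^ 2
        - 2 * (deriv φ t / φ t)) + ζ * (deriv φ t / φ t) = lam + 2) ∧
     (∀ t : ℝ, -p₃ * (deriv (deriv φ) t / φ t + (ζ - 1) * (deriv φ t / φ t) ^ 2
        - 2 * (deriv φ t / φ t)) + ζ * (deriv φ t / φ t) = lam + 2)) ↔
    (lam = 0 ∧ 2 * η = ζ ^ 2 ∧ ∃ c₀ : ℝ, 0 < c₀ ∧
      ∀ t : ℝ, φ t = c₀ * Real.exp (2 * t / ζ)) := by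
  have hne : ∀ t : ℝ, φ t ≠ 0 := fun t => (hφpos t).ne'
  -- derivative of the log-derivative u = φ'/φ
  have hu : ∀ t : ℝ, HasDerivAt (fun s => deriv φ s / φ s)
      (deriv (deriv φ) t / φ t - (deriv φ t / φ t) ^ 2) t := by
    intro t
    have h := ((hφ' t).hasDerivAt).div ((hφ t).hasDerivAt) (hne t)
    refine h.congr_deriv ?_
    field_simp [hne t]
  constructor
  · rintro ⟨h1, h2, h3, h4⟩
    -- the bracket vanishes identically
    have hE : ∀ t : ℝ, deriv (deriv φ) t / φ t + (ζ - 1) * (deriv φ t / φ t) ^ 2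
        - 2 * (deriv φ t / φ t) = 0 := by
      intro t
      rcases hp with h | h | h
      · have hd : (p₂ - p₁) * (deriv (deriv φ) t / φ t + (ζ - 1) * (deriv φ t / φ t) ^ 2
            - 2 * (deriv φ t / φ t)) = 0 := by linarith [h2 t, h3 t]
        rcases mul_eq_zero.mp hd with h' | h'
        · exact absurd (sub_eq_zero.mp h').symm h
        · exact h'
      · have hd : (p₃ - p₁) * (deriv (deriv φ) t / φ t + (ζ - 1) * (deriv φ t / φ t) ^ 2
            - 2 * (deriv φ t / φ t)) = 0 := by linarith [h2 t, h4 t]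
        rcases mul_eq_zero.mp hd with h' | h'
        · exact absurd (sub_eq_zero.mp h').symm h
        · exact h'
      · have hd : (p₃ - p₂) * (deriv (deriv φ) t / φ t + (ζ - 1) * (deriv φ t / φ t) ^ 2
            - 2 * (deriv φ t / φ t)) = 0 := by linarith [h3 t, h4 t]
        rcases mul_eq_zero.mp hd with h' | h'
        · exact absurd (sub_eq_zero.mp h').symm h
        · exact h'
    have hk : ∀ t : ℝ, ζ * (deriv φ t / φ t) = lam + 2 := by
      intro t
      have h2t := h2 t
      rw [hE t] at h2t
      linarith
    -- ζ ≠ 0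
    have hζ0 : ζ ≠ 0 := by
      intro hz
      have hlam : lam = -2 := by have := hk 0; rw [hz] at this; linarith
      have hηu : ∀ t : ℝ, η * (deriv φ t / φ t) ^ 2 = 2 := by
        intro t
        have h1t := h1 t
        rw [hz] at h1t
        simp only [zero_mul, zero_div] at h1t
        nlinarith [h1t]
      have hcf : (fun t : ℝ => η * (deriv φ t / φ t) ^ 2) = fun _ => (2 : ℝ) := funext hηu
      have hd0 : deriv (fun t : ℝ => η * (deriv φ t / φ t) ^ 2) 0 = 0 := by
        rw [hcf]; simp
      have hD : HasDerivAt (fun t : ℝ => η * (deriv φ t / φ t) ^ 2)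
          (η * (2 * (deriv φ 0 / φ 0) ^ 1 *
            (deriv (deriv φ) 0 / φ 0 - (deriv φ 0 / φ 0) ^ 2))) 0 := ((hu 0).pow 2).const_mul η
      have hDz := hD.deriv
      rw [hd0] at hDz
      have hE0 := hE 0
      rw [hz] at hE0
      have hw : deriv (deriv φ) 0 / φ 0 - (deriv φ 0 / φ 0) ^ 2
          = 2 * (deriv φ 0 / φ 0) := by linarith
      rw [hw] at hDz
      nlinarith [hηu 0, hDz]
    -- u is constant k
    set k : ℝ := (lam + 2) / ζ with hkdef
    have hueq : ∀ t : ℝ, deriv φ t / φ t = k := by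
      intro t
      rw [hkdef, eq_div_iff hζ0]
      linarith [hk t]
    have hcf : (fun t : ℝ => deriv φ t / φ t) = fun _ => k := funext hueq
    have hpp : ∀ t : ℝ, deriv (deriv φ) t / φ t = k ^ 2 := by
      intro t
      have hdz : deriv (fun s : ℝ => deriv φ s / φ s) t = 0 := by rw [hcf]; simp
      have := (hu t).deriv
      rw [hdz] at this
      rw [hueq t] at this
      linarith
    have hkk : k * (ζ * k - 2) = 0 := by
      have hE0 := hE 0
      rw [hueq 0, hpp 0] at hE0
      nlinarith [hE0]
    have hζk : ζ * k = lam + 2 := by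
      rw [hkdef]; field_simp
    rcases mul_eq_zero.mp hkk with hk0 | hk2
    · -- k = 0 : contradiction
      exfalso
      have hlam : lam = -2 := by rw [hk0] at hζk; linarith [hζk]
      have hd1 : deriv φ 0 = 0 := by
        have := hueq 0; rw [hk0] at this
        exact (div_eq_zero_iff.mp this).resolve_right (hne 0)
      have hd2 : deriv (deriv φ) 0 = 0 := by
        have := hpp 0; rw [hk0] at this
        simp only [ne_eq, zero_pow, OfNat.ofNat_ne_zero, not_false_eq_true] at this
        exact (div_eq_zero_iff.mp this).resolve_right (hne 0)
      have h10 := h1 0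
      rw [hd1, hd2] at h10
      simp at h10
      linarith
    · have hζk2 : ζ * k = 2 := by linarith
      have hlam : lam = 0 := by linarith [hζk]
      have hknz : k ≠ 0 := by
        intro h0; rw [h0, mul_zero] at hζk2; norm_num at hζk2
      have h2η : 2 * η = ζ ^ 2 := by
        have h10 := h1 0
        rw [hlam] at h10
        have hdp : deriv φ 0 = k * φ 0 := by
          have := hueq 0; rw [div_eq_iff (hne 0)] at this; linarith [this]
        have hdpp : deriv (deriv φ) 0 = k ^ 2 * φ 0 := by
          have := hpp 0; rw [div_eq_iff (hne 0)] at this; linarith [this]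
        rw [hdp, hdpp] at h10
        have hφ0 := hne 0
        field_simp at h10
        -- h10 should be polynomial identity in ζ, η, k, φ 0
        have hA : ζ * k - η * k ^ 2 = 0 := by nlinarith [h10, hφpos 0]
        have hek : η * k ^ 2 = 2 := by linarith [hζk2]
        have e1 : η * (ζ * k) ^ 2 = ζ ^ 2 * (η * k ^ 2) := by ring
        rw [hζk2, hek] at e1
        linarith
      refine ⟨hlam, h2η, φ 0, hφpos 0, ?_⟩
      intro t
      have hode : ∀ s : ℝ, deriv φ s = k * φ s := by
        intro s
        have := hueq s
        rw [div_eq_iff (hne s)] at this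
        linarith [this]
      have := exp_ode_aux φ hφ k hode t
      rw [this]
      congr 1
      have hkval : k = 2 / ζ := by
        rw [eq_div_iff hζ0]
        linarith [hζk2]
      rw [hkval]; ring
  · rintro ⟨hlam, h2η, c₀, hc₀, hφeq⟩
    have hζ0 : ζ ≠ 0 := by
      intro hz
      have hη0 : η = 0 := by rw [hz] at h2η; nlinarith
      have hp1 : p₁ = 0 := by nlinarith [sq_nonneg p₁, sq_nonneg p₂, sq_nonneg p₃]
      have hp2 : p₂ = 0 := by nlinarith [sq_nonneg p₁, sq_nonneg p₂, sq_nonneg p₃]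
      have hp3 : p₃ = 0 := by nlinarith [sq_nonneg p₁, sq_nonneg p₂, sq_nonneg p₃]
      rcases hp with h | h | h <;> rw [hp1, hp2, hp3] at * <;> exact h rfl
    have hfun : φ = fun t => c₀ * Real.exp (2 * t / ζ) := funext hφeq
    subst hfun
    set k : ℝ := 2 / ζ with hkdef
    have hDφ : ∀ t : ℝ, HasDerivAt (fun t : ℝ => c₀ * Real.exp (2 * t / ζ))
        (k * (c₀ * Real.exp (2 * t / ζ))) t := by
      intro t
      have hlin : HasDerivAt (fun t : ℝ => 2 * t / ζ) (2 / ζ) t := by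
        simpa using ((hasDerivAt_id t).const_mul 2).div_const ζ
      have := ((Real.hasDerivAt_exp (2 * t / ζ)).comp t hlin).const_mul c₀
      refine this.congr_deriv ?_
      rw [hkdef]; ring
    have hd1 : ∀ t : ℝ, deriv (fun t : ℝ => c₀ * Real.exp (2 * t / ζ)) t
        = k * (c₀ * Real.exp (2 * t / ζ)) := fun t => (hDφ t).deriv
    have hd1f : deriv (fun t : ℝ => c₀ * Real.exp (2 * t / ζ))
        = fun t => k * (c₀ * Real.exp (2 * t / ζ)) := funext hd1
    have hd2 : ∀ t : ℝ, deriv (deriv (fun t : ℝ => c₀ * Real.exp (2 * t / ζ))) t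
        = k ^ 2 * (c₀ * Real.exp (2 * t / ζ)) := by
      intro t
      rw [hd1f]
      have := ((hDφ t).const_mul k).deriv
      rw [this]; ring
    have hφt : ∀ t : ℝ, (0:ℝ) < c₀ * Real.exp (2 * t / ζ) :=
      fun t => mul_pos hc₀ (Real.exp_pos _)
    have hζk : ζ * k = 2 := by rw [hkdef]; field_simp
    have hηk : η * k ^ 2 = 2 := by
      have : η * (ζ * k) ^ 2 = ζ ^ 2 * (η * k ^ 2) := by ring
      rw [hζk] at this
      nlinarith [this, h2η, sq_nonneg ζ]
    refine ⟨?_, ?_, ?_, ?_⟩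
    · intro t
      rw [hd1 t, hd2 t, hlam]
      set A : ℝ := c₀ * Real.exp (2 * t / ζ) with hA
      have hAne : A ≠ 0 := (hφt t).ne'
      have e0 : ζ * (k * A - k ^ 2 * A) / A - (η - ζ) * (k * A / A) ^ 2
          = ζ * (k - k ^ 2) - (η - ζ) * k ^ 2 := by
        field_simp [hAne]
      rw [e0]
      linear_combination hζk - hηk
    · intro t
      rw [hd1 t, hd2 t, hlam]
      set A : ℝ := c₀ * Real.exp (2 * t / ζ) with hA
      have hAne : A ≠ 0 := (hφt t).ne'
      have e0 : -p₁ * (k ^ 2 * A / A + (ζ - 1) * (k * A / A) ^ 2 - 2 * (k * A / A))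
          + ζ * (k * A / A)
          = -p₁ * (k ^ 2 + (ζ - 1) * k ^ 2 - 2 * k) + ζ * k := by
        field_simp [hAne]
      rw [e0]
      linear_combination (1 - p₁ * k) * hζk
    · intro t
      rw [hd1 t, hd2 t, hlam]
      set A : ℝ := c₀ * Real.exp (2 * t / ζ) with hA
      have hAne : A ≠ 0 := (hφt t).ne'
      have e0 : -p₂ * (k ^ 2 * A / A + (ζ - 1) * (k * A / A) ^ 2 - 2 * (k * A / A))
          + ζ * (k * A / A)
          = -p₂ * (k ^ 2 + (ζ - 1) * k ^ 2 - 2 * k) + ζ * k := by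
        field_simp [hAne]
      rw [e0]
      linear_combination (1 - p₂ * k) * hζk
    · intro t
      rw [hd1 t, hd2 t, hlam]
      set A : ℝ := c₀ * Real.exp (2 * t / ζ) with hA
      have hAne : A ≠ 0 := (hφt t).ne'
      have e0 : -p₃ * (k ^ 2 * A / A + (ζ - 1) * (k * A / A) ^ 2 - 2 * (k * A / A))
          + ζ * (k * A / A)
          = -p₃ * (k ^ 2 + (ζ - 1) * k ^ 2 - 2 * k) + ζ * k := by
        field_simp [hAne]
      rw [e0]
      linear_combination (1 - p₃ * k) * hζk
end

section
/- Let ζ, η, S̄ ∈ ℝ with ζ ≠ 0 and η ≥ 0, and suppose S̄ + 6 < 9ζ²/(η + ζ²). Set a = (3 + √(9 - (S̄+6)(η+ζ²)/ζ²))/2 and b = (3 - √(9 - (S̄+6)(η+ζ²)/ζ²))/2. Let φ : ℝ → ℝ be twice differentiable with φ(t) > 0 for all t. Then -2ζ·φ''(t)/φ(t) - (η + ζ² - 2ζ)·(φ'(t)/φ(t))² + 6ζ·φ'(t)/φ(t) - 6 = S̄ for all t ∈ ℝ if and only if there exist constants c₁, c₂ ∈ ℝ such that c₁·exp(a·t)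 + c₂·exp(b·t) > 0 for all t and φ(t) = (c₁·exp(a·t) + c₂·exp(b·t))^{2ζ/(η+ζ²)} for all t ∈ ℝ. -/
lemma alg (ζ η Sbar k q P P' P'' X : ℝ) (hP : 0 < P) (hX : 0 < X) (hζ : ζ ≠ 0)
    (hk0 : k ≠ 0) (hk2 : 2*ζ*k = η + ζ^2) (hq : (Sbar+6)*(η+ζ^2) = 4*ζ^2*q) :
    (-2*ζ*P''/P - (η+ζ^2-2*ζ)*(P'/P)^2 + 6*ζ*(P'/P) - 6 = Sbar) ↔
    (P''*k*(X/P) + (P'*k)*(P'*(k-1)*(X/P/P)) = 3*(P'*k*(X/P)) - q*X) := by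
  have hPne := hP.ne'
  have hXne := hX.ne'
  have hid : (P''*k*(X/P) + (P'*k)*(P'*(k-1)*(X/P/P))) - (3*(P'*k*(X/P)) - q*X)
      = X/P^2 * ((k*P''*P + k*(k-1)*P'^2) - (3*k*P'*P - q*P^2)) := by
    field_simp
  constructor
  · intro h
    have h1 : -2*ζ*P''*P - (η+ζ^2-2*ζ)*P'^2 + 6*ζ*P'*P - 6*P^2 = Sbar*P^2 := by
      field_simp at h; linear_combination h
    have h2 : k*P''*P + k*(k-1)*P'^2 = 3*k*P'*P - q*P^2 := by
      apply mul_left_cancel₀ (mul_ne_zero (by norm_num : (-4:ℝ) ≠ 0) (pow_ne_zero 2 hζ))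
      linear_combination 2*ζ*k*h1 + ((Sbar+6)*P^2 - 2*ζ*k*P'^2)*hk2 + P^2*hq
    rw [← sub_eq_zero, hid, h2, sub_self, mul_zero]
  · intro h
    have e := hid
    rw [sub_eq_zero.mpr h] at e
    have h2 : (k*P''*P + k*(k-1)*P'^2) - (3*k*P'*P - q*P^2) = 0 := by
      rcases mul_eq_zero.mp e.symm with h0 | h0
      · exact absurd h0 (by positivity)
      · exact h0
    have h1 : -2*ζ*P''*P - (η+ζ^2-2*ζ)*P'^2 + 6*ζ*P'*P - 6*P^2 = Sbar*P^2 := by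
      apply mul_left_cancel₀ (mul_ne_zero (mul_ne_zero two_ne_zero hζ) hk0)
      linear_combination (-4*ζ^2)*h2 + (2*ζ*k*P'^2 - (Sbar+6)*P^2)*hk2 - P^2*hq
    field_simp
    linear_combination h1

lemma expderiv (c a : ℝ) (t : ℝ) :
    HasDerivAt (fun t : ℝ => c * Real.exp (a * t)) (c * a * Real.exp (a * t)) t := by
  have h : HasDerivAt (fun t : ℝ => a * t) a t := by
    simpa using (hasDerivAt_id t).const_mul a
  have := (h.exp).const_mul c
  refine this.congr_deriv ?_
  ring

lemma linODE (a b : ℝ) (hab : a ≠ b) (ψ : ℝ → ℝ) (h1 : Differentiable ℝ ψ)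
    (h2 : Differentiable ℝ (deriv ψ))
    (hode : ∀ t, deriv (deriv ψ) t = (a + b) * deriv ψ t - a * b * ψ t) :
    ∃ c₁ c₂ : ℝ, ∀ t, ψ t = c₁ * Real.exp (a * t) + c₂ * Real.exp (b * t) := by
  have hsub : a - b ≠ 0 := sub_ne_zero.mpr hab
  set u : ℝ → ℝ := fun t => Real.exp (-a * t) * (deriv ψ t - b * ψ t) with hu
  have hud : ∀ t, HasDerivAt u 0 t := by
    intro t
    have hA : HasDerivAt (fun t : ℝ => Real.exp (-a * t)) (1 * (-a) * Real.exp (-a * t)) t := by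
      simpa using expderiv 1 (-a) t
    have hB : HasDerivAt (fun t => deriv ψ t - b * ψ t)
        (deriv (deriv ψ) t - b * deriv ψ t) t :=
      ((h2 t).hasDerivAt).sub (((h1 t).hasDerivAt).const_mul b)
    have := hA.mul hB
    refine this.congr_deriv ?_
    rw [hode t]; ring
  have hconst : ∀ t, u t = u 0 := fun t =>
    is_const_of_deriv_eq_zero (fun x => (hud x).differentiableAt) (fun x => (hud x).deriv) t 0
  set C := u 0 with hC
  have hC' : ∀ t, deriv ψ t - b * ψ t = C * Real.exp (a * t) := by
    intro t
    have h := hconst t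
    have hne : Real.exp (a * t) ≠ 0 := (Real.exp_pos _).ne'
    have h2' : Real.exp (a * t) * (Real.exp (-a * t) * (deriv ψ t - b * ψ t))
        = Real.exp (a * t) * C := by rw [show Real.exp (-a*t) * (deriv ψ t - b * ψ t) = u t from rfl, h]
    rwa [← mul_assoc, ← Real.exp_add, (by ring : a * t + -a * t = 0), Real.exp_zero,
      one_mul, mul_comm (Real.exp (a*t)) C] at h2'
  set v : ℝ → ℝ := fun t => Real.exp (-b * t) * ψ t - C / (a - b) * Real.exp ((a - b) * t)
    with hv
  have hvd : ∀ t, HasDerivAt v 0 t := by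
    intro t
    have hA : HasDerivAt (fun t : ℝ => Real.exp (-b * t)) (1 * (-b) * Real.exp (-b * t)) t := by
      simpa using expderiv 1 (-b) t
    have hB := hA.mul ((h1 t).hasDerivAt)
    have hCc := expderiv (C / (a - b)) (a - b) t
    have := hB.sub hCc
    refine this.congr_deriv ?_
    have e1 : Real.exp ((a - b) * t) = Real.exp (-b * t) * Real.exp (a * t) := by
      rw [← Real.exp_add]; ring_nf
    have e2 : deriv ψ t = C * Real.exp (a * t) + b * ψ t := by
      have := hC' t; linarith
    rw [e2, e1]
    field_simp
    ring
  have hvconst : ∀ t, v t = v 0 := fun t =>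
    is_const_of_deriv_eq_zero (fun x => (hvd x).differentiableAt) (fun x => (hvd x).deriv) t 0
  refine ⟨C / (a - b), v 0, fun t => ?_⟩
  have h := hvconst t
  have hne : Real.exp (b * t) ≠ 0 := (Real.exp_pos _).ne'
  have h2' : Real.exp (b * t) * (Real.exp (-b * t) * ψ t - C / (a - b) * Real.exp ((a - b) * t))
      = Real.exp (b * t) * v 0 := by rw [← h]
  have e3 : Real.exp (b * t) * Real.exp (-b * t) = 1 := by
    rw [← Real.exp_add]; ring_nf; exact Real.exp_zero
  have e4 : Real.exp (b * t) * Real.exp ((a - b) * t) = Real.exp (a * t) := by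
    rw [← Real.exp_add]; ring_nf
  calc ψ t = Real.exp (b * t) * Real.exp (-b * t) * ψ t := by rw [e3]; ring
    _ = C / (a - b) * Real.exp (a * t) + v 0 * Real.exp (b * t) := by
        rw [mul_assoc]
        have : Real.exp (b*t) * (Real.exp (-b*t) * ψ t)
            = Real.exp (b*t) * v 0 + C/(a-b) * (Real.exp (b*t) * Real.exp ((a-b)*t)) := by
          linarith [h2']
        rw [this, e4]; ring

theorem stmt_15 (ζ η Sbar : ℝ) (hζ : ζ ≠ 0) (hη : 0 ≤ η)
    (hS : Sbar + 6 < 9 * ζ ^ 2 / (η + ζ ^ 2))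
    (a b : ℝ)
    (ha : a = (3 + Real.sqrt (9 - (Sbar + 6) * (η + ζ ^ 2) / ζ ^ 2)) / 2)
    (hb : b = (3 - Real.sqrt (9 - (Sbar + 6) * (η + ζ ^ 2) / ζ ^ 2)) / 2)
    (φ : ℝ → ℝ)
    (hφ : Differentiable ℝ φ) (hφ' : Differentiable ℝ (deriv φ))
    (hφpos : ∀ t : ℝ, 0 < φ t) :
    (∀ t : ℝ, -2 * ζ * deriv (deriv φ) t / φ t
        - (η + ζ ^ 2 - 2 * ζ) * (deriv φ t / φ t) ^ 2
        + 6 * ζ * (deriv φ t / φ t) - 6 = Sbar) ↔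
    ∃ c₁ c₂ : ℝ, (∀ t : ℝ, 0 < c₁ * Real.exp (a * t) + c₂ * Real.exp (b * t)) ∧
      ∀ t : ℝ, φ t = (c₁ * Real.exp (a * t) + c₂ * Real.exp (b * t)) ^ (2 * ζ / (η + ζ ^ 2)) := by
  have hζ2 : (0:ℝ) < ζ ^ 2 := by positivity
  have hden : (0:ℝ) < η + ζ ^ 2 := by positivity
  set D : ℝ := 9 - (Sbar + 6) * (η + ζ ^ 2) / ζ ^ 2 with hDdef
  have hD : 0 < D := by
    have h1 : (Sbar + 6) * (η + ζ ^ 2) < 9 * ζ ^ 2 := by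
      have := (lt_div_iff₀ hden).mp hS
      linarith
    have h2 : (Sbar + 6) * (η + ζ ^ 2) / ζ ^ 2 < 9 := by
      rw [div_lt_iff₀ hζ2]; linarith
    simp only [hDdef]; linarith
  set s : ℝ := Real.sqrt D with hsdef
  have hs : 0 < s := Real.sqrt_pos.mpr hD
  have hs2 : s ^ 2 = D := Real.sq_sqrt hD.le
  have hab_sum : a + b = 3 := by rw [ha, hb]; ring
  have hab_sub : a - b = s := by rw [ha, hb]; ring
  have hab_ne : a ≠ b := by
    intro hh; rw [hh, sub_self] at hab_sub; exact hs.ne hab_sub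
  have hq : (Sbar + 6) * (η + ζ ^ 2) = 4 * ζ ^ 2 * (a * b) := by
    have h4 : 4 * (a * b) = 9 - D := by
      rw [ha, hb]
      have : (3 + s) / 2 * ((3 - s) / 2) = (9 - s ^ 2) / 4 := by ring
      rw [this, hs2]; ring
    have h5 : ζ ^ 2 * D = 9 * ζ ^ 2 - (Sbar + 6) * (η + ζ ^ 2) := by
      simp only [hDdef]; field_simp
    nlinarith [h4, h5]
  set k : ℝ := (η + ζ ^ 2) / (2 * ζ) with hkdef
  have h2ζ : (2:ℝ) * ζ ≠ 0 := by simpa using hζ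
  have hk0 : k ≠ 0 := div_ne_zero hden.ne' h2ζ
  have hk2 : 2 * ζ * k = η + ζ ^ 2 := by rw [hkdef]; field_simp
  have hkinv : 2 * ζ / (η + ζ ^ 2) = k⁻¹ := by
    rw [hkdef, inv_div]
  -- ψ = φ^k
  set ψ : ℝ → ℝ := fun t => φ t ^ k with hψdef
  have hψpos : ∀ t, 0 < ψ t := fun t => Real.rpow_pos_of_pos (hφpos t) k
  have hψd : ∀ t, HasDerivAt ψ (deriv φ t * k * φ t ^ (k - 1)) t := fun t =>
    (hφ t).hasDerivAt.rpow_const (Or.inl (hφpos t).ne')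
  have hψderiv : deriv ψ = fun t => deriv φ t * k * φ t ^ (k - 1) :=
    funext fun t => (hψd t).deriv
  have hψd2 : ∀ t, HasDerivAt (deriv ψ)
      (deriv (deriv φ) t * k * φ t ^ (k - 1)
        + deriv φ t * k * (deriv φ t * (k - 1) * φ t ^ (k - 1 - 1))) t := by
    intro t
    rw [hψderiv]
    have h1 : HasDerivAt (fun t => deriv φ t * k) (deriv (deriv φ) t * k) t :=
      ((hφ' t).hasDerivAt).mul_const k
    have h2 : HasDerivAt (fun t => φ t ^ (k - 1)) (deriv φ t * (k - 1) * φ t ^ (k - 1 - 1)) t :=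
      (hφ t).hasDerivAt.rpow_const (Or.inl (hφpos t).ne')
    have := h1.mul h2
    exact this
  have hψdiff : Differentiable ℝ ψ := fun t => (hψd t).differentiableAt
  have hψdiff' : Differentiable ℝ (deriv ψ) := fun t => (hψd2 t).differentiableAt
  have hrw1 : ∀ t, φ t ^ (k - 1) = φ t ^ k / φ t := by
    intro t
    rw [Real.rpow_sub (hφpos t), Real.rpow_one]
  have hrw2 : ∀ t, φ t ^ (k - 1 - 1) = φ t ^ k / φ t / φ t := by
    intro t
    rw [Real.rpow_sub (hφpos t), Real.rpow_sub (hφpos t), Real.rpow_one]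
  have keyODE : ∀ t, (-2 * ζ * deriv (deriv φ) t / φ t
        - (η + ζ ^ 2 - 2 * ζ) * (deriv φ t / φ t) ^ 2
        + 6 * ζ * (deriv φ t / φ t) - 6 = Sbar) ↔
      deriv (deriv ψ) t = 3 * deriv ψ t - a * b * ψ t := by
    intro t
    have e1 : deriv ψ t = deriv φ t * k * (φ t ^ k / φ t) := by
      rw [(hψd t).deriv, hrw1 t]
    have e2 : deriv (deriv ψ) t = deriv (deriv φ) t * k * (φ t ^ k / φ t)
        + deriv φ t * k * (deriv φ t * (k - 1) * (φ t ^ k / φ t / φ t)) := by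
      rw [(hψd2 t).deriv, hrw1 t, hrw2 t]
    rw [e1, e2, hψdef]
    have := alg ζ η Sbar k (a * b) (φ t) (deriv φ t) (deriv (deriv φ) t) (φ t ^ k)
      (hφpos t) (Real.rpow_pos_of_pos (hφpos t) k) hζ hk0 hk2 hq
    exact this
  constructor
  · intro h
    have hode : ∀ t, deriv (deriv ψ) t = (a + b) * deriv ψ t - a * b * ψ t := by
      intro t
      rw [hab_sum]
      exact (keyODE t).mp (h t)
    obtain ⟨c₁, c₂, hc⟩ := linODE a b hab_ne ψ hψdiff hψdiff' hode
    refine ⟨c₁, c₂, fun t => by rw [← hc t]; exact hψpos t, fun t => ?_⟩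
    rw [← hc t, hkinv, hψdef]
    rw [← Real.rpow_mul (hφpos t).le, mul_inv_cancel₀ hk0, Real.rpow_one]
  · rintro ⟨c₁, c₂, hpos, heq⟩
    set g : ℝ → ℝ := fun t => c₁ * Real.exp (a * t) + c₂ * Real.exp (b * t) with hgdef
    have hψg : ψ = g := by
      funext t
      rw [hψdef]
      show φ t ^ k = g t
      rw [heq t, hkinv]
      rw [← Real.rpow_mul (hpos t).le, inv_mul_cancel₀ hk0, Real.rpow_one]
    intro t
    rw [keyODE t, hψg]
    have hg1 : ∀ t, HasDerivAt g (c₁ * a * Real.exp (a * t) + c₂ * b * Real.exp (b * t)) t :=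
      fun t => (expderiv c₁ a t).add (expderiv c₂ b t)
    have hgd : deriv g = fun t => c₁ * a * Real.exp (a * t) + c₂ * b * Real.exp (b * t) :=
      funext fun t => (hg1 t).deriv
    have hg2 : HasDerivAt (deriv g)
        (c₁ * a * a * Real.exp (a * t) + c₂ * b * b * Real.exp (b * t)) t := by
      rw [hgd]
      have := ((expderiv c₁ a t).const_mul a).add ((expderiv c₂ b t).const_mul b)
      have hfun : (fun t => c₁ * a * Real.exp (a * t) + c₂ * b * Real.exp (b * t))
          = (fun y => a * (c₁ * Real.exp (a * y))) + fun y => b * (c₂ * Real.exp (b * y)) := by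
        funext x; simp only [Pi.add_apply]; ring
      rw [hfun]
      refine this.congr_deriv ?_
      ring
    rw [hg2.deriv, hgd]
    show c₁ * a * a * Real.exp (a * t) + c₂ * b * b * Real.exp (b * t)
      = 3 * (c₁ * a * Real.exp (a * t) + c₂ * b * Real.exp (b * t)) - a * b * g t
    show _ = 3 * (c₁ * a * Real.exp (a * t) + c₂ * b * Real.exp (b * t))
      - a * b * (c₁ * Real.exp (a * t) + c₂ * Real.exp (b * t))
    linear_combination (c₁ * Real.exp (a * t) * a + c₂ * Real.exp (b * t) * b) * hab_sum
end

section
/- Let ζ, η ∈ ℝ with ζ ≠ 0 and η ≥ 0, and let S̄ ∈ ℝ satisfy S̄ + 6 = 9ζ²/(η + ζ²). Let φ : ℝ → ℝ be twice differentiable with φ(t) > 0 for all t. Then -2ζ·φ''(t)/φ(t) - (η + ζ² - 2ζ)·(φ'(t)/φ(t))² + 6ζ·φ'(t)/φ(t) - 6 = S̄ for all t ∈ ℝ if and only if there exist constants c₁, c₂ ∈ ℝ such that c₁·exp((3/2)·t) + c₂·t·exp((3/2)·t) > 0 for all t and φ(t) = (c₁·exp((3/2)·t) + c₂·t·exp((3/2)·t))^{2ζ/(η+ζ²)}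 for all t ∈ ℝ. -/
set_option maxHeartbeats 1000000 in
theorem stmt_16 (ζ η Sbar : ℝ) (hζ : ζ ≠ 0) (hη : 0 ≤ η)
    (hS : Sbar + 6 = 9 * ζ ^ 2 / (η + ζ ^ 2))
    (φ : ℝ → ℝ)
    (hφ : Differentiable ℝ φ) (hφ' : Differentiable ℝ (deriv φ))
    (hφpos : ∀ t : ℝ, 0 < φ t) :
    (∀ t : ℝ, -2 * ζ * deriv (deriv φ) t / φ t
        - (η + ζ ^ 2 - 2 * ζ) * (deriv φ t / φ t) ^ 2
        + 6 * ζ * (deriv φ t / φ t) - 6 = Sbar) ↔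
    ∃ c₁ c₂ : ℝ,
      (∀ t : ℝ, 0 < c₁ * Real.exp ((3/2) * t) + c₂ * t * Real.exp ((3/2) * t)) ∧
      ∀ t : ℝ, φ t = (c₁ * Real.exp ((3/2) * t)
        + c₂ * t * Real.exp ((3/2) * t)) ^ (2 * ζ / (η + ζ ^ 2)) := by
  have hk : (0:ℝ) < η + ζ ^ 2 := by positivity
  have hkne : (η + ζ ^ 2) ≠ 0 := ne_of_gt hk
  set k := η + ζ ^ 2 with hkdef
  set s : ℝ := 2 * ζ / k with hsdef
  constructor
  · -- forward direction
    intro hODE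
    set r : ℝ := k / (2 * ζ) with hrdef
    have hrs : r * s = 1 := by rw [hrdef, hsdef]; field_simp
    clear_value k s r
    have hφne : ∀ t, φ t ≠ 0 := fun t => (hφpos t).ne'
    set ψ : ℝ → ℝ := fun t => φ t ^ r with hψdef
    have hψpos : ∀ t, 0 < ψ t := fun t => Real.rpow_pos_of_pos (hφpos t) r
    have hψd : ∀ t, HasDerivAt ψ (deriv φ t * r * φ t ^ (r - 1)) t := by
      intro t
      rw [hψdef]
      exact ((hφ t).hasDerivAt).rpow_const (Or.inl (hφne t))
    have hexp : ∀ t : ℝ, HasDerivAt (fun t : ℝ => Real.exp (-(3/2) * t))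
        (Real.exp (-(3/2) * t) * (-(3/2))) t := by
      intro t
      have h := ((hasDerivAt_id t).const_mul (-(3/2) : ℝ)).exp
      simpa [mul_comm] using h
    set u : ℝ → ℝ := fun t => ψ t * Real.exp (-(3/2) * t) with hudef
    set C : ℝ → ℝ := fun t => (deriv φ t * r * φ t ^ (r - 1) - 3/2 * ψ t)
        * Real.exp (-(3/2) * t) with hCdef
    have hud : ∀ t, HasDerivAt u (C t) t := by
      intro t
      rw [hudef, hCdef]
      have := (hψd t).mul (hexp t)
      exact this.congr_deriv (by ring)
    have hBd : ∀ t, HasDerivAt (fun t => deriv φ t * r * φ t ^ (r - 1) - 3/2 * ψ t)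
        ((deriv (deriv φ) t * r * φ t ^ (r - 1)
          + deriv φ t * r * (deriv φ t * (r - 1) * φ t ^ (r - 1 - 1)))
          - 3/2 * (deriv φ t * r * φ t ^ (r - 1))) t := by
      intro t
      have h1 : HasDerivAt (fun t => deriv φ t * r * φ t ^ (r - 1))
          (deriv (deriv φ) t * r * φ t ^ (r - 1)
            + deriv φ t * r * (deriv φ t * (r - 1) * φ t ^ (r - 1 - 1))) t := by
        have := (((hφ' t).hasDerivAt).mul_const r).mul
          (((hφ t).hasDerivAt).rpow_const (p := r - 1) (Or.inl (hφne t)))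
        exact this
      exact h1.sub ((hψd t).const_mul (3/2))
    have hCd : ∀ t, HasDerivAt C
        (((deriv (deriv φ) t * r * φ t ^ (r - 1)
          + deriv φ t * r * (deriv φ t * (r - 1) * φ t ^ (r - 1 - 1)))
          - 3/2 * (deriv φ t * r * φ t ^ (r - 1)))
          * Real.exp (-(3/2) * t)
          + (deriv φ t * r * φ t ^ (r - 1) - 3/2 * ψ t)
            * (Real.exp (-(3/2) * t) * (-(3/2)))) t := by
      intro t
      rw [hCdef]
      exact (hBd t).mul (hexp t)
    have hCzero : ∀ t, deriv C t = 0 := by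
      intro t
      rw [(hCd t).deriv]
      have key : 2*ζ*k*(deriv (deriv φ) t)*(φ t) + k*(k - 2*ζ)*(deriv φ t)^2
          - 6*ζ*k*(deriv φ t)*(φ t) + 9*ζ^2*(φ t)^2 = 0 := by
        have h := hODE t
        have hS' : Sbar * k = 9 * ζ ^ 2 - 6 * k := by
          have h9 : (Sbar + 6) * k = 9 * ζ ^ 2 := by
            rw [hS]; field_simp
          linear_combination h9
        field_simp [hφne t] at h
        have h2 : -2*ζ*(deriv (deriv φ) t)*(φ t) - (k - 2*ζ)*(deriv φ t)^2
            + 6*ζ*(deriv φ t)*(φ t) - 6*(φ t)^2 = Sbar * (φ t)^2 := by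
          have hp2 : (φ t)^2 ≠ 0 := pow_ne_zero _ (hφne t)
          apply mul_left_cancel₀ hp2
          linear_combination (φ t)^2 * h
        linear_combination (-k) * h2 - (φ t)^2 * hS'
      have key' : r*(deriv (deriv φ) t)*(φ t) + r*(r-1)*(deriv φ t)^2
          - 3*r*(deriv φ t)*(φ t) + (9/4)*(φ t)^2 = 0 := by
        rw [hrdef]
        field_simp
        linear_combination 4 * key
      have hr1 : φ t ^ (r - 1) = ψ t / φ t := by
        rw [hψdef]
        rw [Real.rpow_sub (hφpos t), Real.rpow_one]
      have hr2 : φ t ^ (r - 1 - 1) = ψ t / φ t / φ t := by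
        rw [Real.rpow_sub (hφpos t) (r-1) 1, Real.rpow_one, hr1]
      rw [hr1, hr2]
      set E := Real.exp (-(3/2) * t) with hE2
      set p := φ t with hp
      set w := ψ t with hw
      set b := deriv φ t with hb
      set a := deriv (deriv φ) t with ha2
      have hpne : p ≠ 0 := hφne t
      field_simp
      linear_combination (4 * E * w) * key'
    have hCdiff : Differentiable ℝ C := fun t => (hCd t).differentiableAt
    have hCconst : ∀ t, C t = C 0 := fun t => is_const_of_deriv_eq_zero hCdiff hCzero t 0
    have hwd : ∀ t, HasDerivAt (fun t => u t - C 0 * t) 0 t := by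
      intro t
      have h := (hud t).sub ((hasDerivAt_id t).const_mul (C 0))
      have hz : C t - C 0 * 1 = 0 := by rw [hCconst t]; ring
      rw [hz] at h
      exact h
    have huconst : ∀ t, u t - C 0 * t = u 0 - C 0 * 0 :=
      fun t => is_const_of_deriv_eq_zero (fun x => (hwd x).differentiableAt)
        (fun x => (hwd x).deriv) t 0
    have hψval : ∀ t, ψ t = u 0 * Real.exp ((3/2) * t) + C 0 * t * Real.exp ((3/2) * t) := by
      intro t
      have h1 := huconst t
      have hu_t : u t = ψ t * Real.exp (-(3/2) * t) := by simp only [hudef]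
      rw [hu_t] at h1
      have hee : Real.exp (-(3/2) * t) * Real.exp ((3/2) * t) = 1 := by
        rw [← Real.exp_add]; norm_num
      linear_combination Real.exp ((3/2) * t) * h1 - ψ t * hee
    refine ⟨u 0, C 0, ?_, ?_⟩
    · intro t
      have h := hψpos t
      rw [hψval t] at h
      exact h
    · intro t
      rw [← hψval t]
      simp only [hψdef]
      rw [← Real.rpow_mul (hφpos t).le, hrs, Real.rpow_one]
  · -- reverse direction
    rintro ⟨c₁, c₂, hgpos, hφeq⟩
    set g : ℝ → ℝ := fun t => c₁ * Real.exp ((3/2) * t) + c₂ * t * Real.exp ((3/2) * t) with hgdef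
    have hφfun : φ = fun t => g t ^ s := funext fun t => hφeq t
    rw [hφfun]
    have hgpos' : ∀ t, 0 < g t := hgpos
    have hgne : ∀ t, g t ≠ 0 := fun t => (hgpos' t).ne'
    have hE : ∀ t : ℝ, HasDerivAt (fun t : ℝ => Real.exp ((3/2) * t)) ((3/2) * Real.exp ((3/2) * t)) t := by
      intro t
      have h := ((hasDerivAt_id t).const_mul (3/2 : ℝ)).exp
      simpa [mul_comm] using h
    have hgd : ∀ t, HasDerivAt g ((3/2) * g t + c₂ * Real.exp ((3/2) * t)) t := by
      intro t
      have h1 := (hE t).const_mul c₁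
      have h2 := ((hasDerivAt_id t).const_mul c₂).mul (hE t)
      have h := h1.add h2
      rw [hgdef]
      exact h.congr_deriv (by simp only [id_eq, mul_one]; ring)
    have hφd : ∀ t, HasDerivAt (fun t => g t ^ s)
        (((3/2) * g t + c₂ * Real.exp ((3/2) * t)) * s * g t ^ (s - 1)) t :=
      fun t => (hgd t).rpow_const (Or.inl (hgne t))
    have hD : deriv (fun t => g t ^ s)
        = fun t => ((3/2) * g t + c₂ * Real.exp ((3/2) * t)) * s * g t ^ (s - 1) :=
      funext fun t => (hφd t).deriv
    have hDd : ∀ t, HasDerivAt (fun t => ((3/2) * g t + c₂ * Real.exp ((3/2) * t)) * s * g t ^ (s - 1))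
        (((3/2) * ((3/2) * g t + c₂ * Real.exp ((3/2) * t)) + c₂ * ((3/2) * Real.exp ((3/2) * t))) * s * g t ^ (s - 1)
          + ((3/2) * g t + c₂ * Real.exp ((3/2) * t)) * s
            * (((3/2) * g t + c₂ * Real.exp ((3/2) * t)) * (s - 1) * g t ^ (s - 1 - 1))) t := by
      intro t
      have hG1 : HasDerivAt (fun t => ((3/2) * g t + c₂ * Real.exp ((3/2) * t)) * s)
          (((3/2) * ((3/2) * g t + c₂ * Real.exp ((3/2) * t)) + c₂ * ((3/2) * Real.exp ((3/2) * t))) * s) t :=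
        (((hgd t).const_mul (3/2)).add ((hE t).const_mul c₂)).mul_const s
      have hP : HasDerivAt (fun t => g t ^ (s - 1))
          (((3/2) * g t + c₂ * Real.exp ((3/2) * t)) * (s - 1) * g t ^ (s - 1 - 1)) t :=
        (hgd t).rpow_const (Or.inl (hgne t))
      have := hG1.mul hP
      convert this using 1
      all_goals rfl
    intro t
    rw [hD]
    rw [(hDd t).deriv]
    beta_reduce
    have hs1 : g t ^ (s - 1) = g t ^ s / g t := by
      rw [Real.rpow_sub (hgpos' t), Real.rpow_one]
    have hs2 : g t ^ (s - 1 - 1) = g t ^ s / g t / g t := by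
      rw [Real.rpow_sub (hgpos' t) (s-1) 1, Real.rpow_one, hs1]
    rw [hs1, hs2]
    have hSbar : Sbar = 9 * ζ ^ 2 / k - 6 := by
      have := hS; linarith
    rw [hSbar]
    have hPpos : 0 < g t ^ s := Real.rpow_pos_of_pos (hgpos' t) s
    set P := g t ^ s with hPdef
    set a := g t with hadef
    set b := Real.exp ((3/2) * t) with hbdef
    have hane : a ≠ 0 := hgne t
    have hPne : P ≠ 0 := hPpos.ne'
    rw [hsdef]
    field_simp
    ring
end

section
/- Let ζ, η, S̄ ∈ ℝ with ζ ≠ 0 and η ≥ 0, and suppose S̄ + 6 > 9ζ²/(η + ζ²). Set θ = √((S̄+6)(η+ζ²)/ζ² - 9)/2. Let φ : ℝ → ℝ be twice differentiable with φ(t) > 0 for all t. Then -2ζ·φ''(t)/φ(t) - (η + ζ² - 2ζ)·(φ'(t)/φ(t))² + 6ζ·φ'(t)/φ(t) - 6 = S̄ for all t ∈ ℝ if and only if there exist constants c₁, c₂ ∈ ℝ such that c₁·exp((3/2)·t)·cos(θt) + c₂·exp((3/2)·t)·sin(θt) > 0 for all t and φ(t) = (c₁·exp((3/2)·t)·cos(θt)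 + c₂·exp((3/2)·t)·sin(θt))^{2ζ/(η+ζ²)} for all t ∈ ℝ. -/
private lemma osc (θ : ℝ) (hθ : θ ≠ 0) (f f' : ℝ → ℝ)
    (h1 : ∀ t, HasDerivAt f (f' t) t)
    (h2 : ∀ t, HasDerivAt f' (-θ ^ 2 * f t) t) (t : ℝ) :
    f t = f 0 * Real.cos (θ * t) + (f' 0 / θ) * Real.sin (θ * t) := by
  have hcos : ∀ s : ℝ, HasDerivAt (fun u => Real.cos (θ * u)) (-Real.sin (θ * s) * θ) s := by
    intro s
    have h := (Real.hasDerivAt_cos (θ * s)).comp s ((hasDerivAt_id s).const_mul θ)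
    simpa [Function.comp_def] using h
  have hsin : ∀ s : ℝ, HasDerivAt (fun u => Real.sin (θ * u)) (Real.cos (θ * s) * θ) s := by
    intro s
    have h := (Real.hasDerivAt_sin (θ * s)).comp s ((hasDerivAt_id s).const_mul θ)
    simpa [Function.comp_def] using h
  set C1 : ℝ → ℝ := fun u => f u * Real.cos (θ * u) - (f' u / θ) * Real.sin (θ * u) with hC1
  set C2 : ℝ → ℝ := fun u => f u * Real.sin (θ * u) + (f' u / θ) * Real.cos (θ * u) with hC2
  have hC1' : ∀ s, HasDerivAt C1 0 s := by
    intro s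
    have h := ((h1 s).mul (hcos s)).sub (((h2 s).div_const θ).mul (hsin s))
    refine h.congr_deriv ?_
    field_simp
    ring
  have hC2' : ∀ s, HasDerivAt C2 0 s := by
    intro s
    have h := ((h1 s).mul (hsin s)).add (((h2 s).div_const θ).mul (hcos s))
    refine h.congr_deriv ?_
    field_simp
    ring
  have e1 : C1 t = C1 0 :=
    is_const_of_deriv_eq_zero (fun s => (hC1' s).differentiableAt)
      (fun s => (hC1' s).deriv) t 0
  have e2 : C2 t = C2 0 :=
    is_const_of_deriv_eq_zero (fun s => (hC2' s).differentiableAt)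
      (fun s => (hC2' s).deriv) t 0
  have key : f t = C1 t * Real.cos (θ * t) + C2 t * Real.sin (θ * t) := by
    simp only [hC1, hC2]
    have h := Real.sin_sq_add_cos_sq (θ * t)
    linear_combination (-(f t)) * h
  rw [key, e1, e2]
  simp [hC1, hC2]

set_option maxHeartbeats 1000000 in
theorem stmt_17 (ζ η Sbar : ℝ) (hζ : ζ ≠ 0) (hη : 0 ≤ η)
    (hS : 9 * ζ ^ 2 / (η + ζ ^ 2) < Sbar + 6)
    (θ : ℝ) (hθ : θ = Real.sqrt ((Sbar + 6) * (η + ζ ^ 2) / ζ ^ 2 - 9) / 2)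
    (φ : ℝ → ℝ)
    (hφ : Differentiable ℝ φ) (hφ' : Differentiable ℝ (deriv φ))
    (hφpos : ∀ t : ℝ, 0 < φ t) :
    (∀ t : ℝ, -2 * ζ * deriv (deriv φ) t / φ t
        - (η + ζ ^ 2 - 2 * ζ) * (deriv φ t / φ t) ^ 2
        + 6 * ζ * (deriv φ t / φ t) - 6 = Sbar) ↔
    ∃ c₁ c₂ : ℝ,
      (∀ t : ℝ, 0 < c₁ * Real.exp ((3/2) * t) * Real.cos (θ * t)
        + c₂ * Real.exp ((3/2) * t) * Real.sin (θ * t)) ∧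
      ∀ t : ℝ, φ t = (c₁ * Real.exp ((3/2) * t) * Real.cos (θ * t)
        + c₂ * Real.exp ((3/2) * t) * Real.sin (θ * t)) ^ (2 * ζ / (η + ζ ^ 2)) := by
  have hz2 : (0:ℝ) < ζ ^ 2 := by positivity
  have hA : (0:ℝ) < η + ζ ^ 2 := by positivity
  have hAne : η + ζ ^ 2 ≠ 0 := hA.ne'
  have harg : 0 < (Sbar + 6) * (η + ζ ^ 2) / ζ ^ 2 - 9 := by
    rw [sub_pos, lt_div_iff₀ hz2]
    rw [div_lt_iff₀ hA] at hS
    nlinarith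
  have hθpos : 0 < θ := by
    rw [hθ]
    positivity
  have hθne : θ ≠ 0 := hθpos.ne'
  have hθ2 : θ ^ 2 = ((Sbar + 6) * (η + ζ ^ 2) / ζ ^ 2 - 9) / 4 := by
    rw [hθ, div_pow, Real.sq_sqrt harg.le]
    norm_num
  set A : ℝ := η + ζ ^ 2 with hAdef
  set k : ℝ := A / (2 * ζ) with hkdef
  have hkne : k ≠ 0 := by
    rw [hkdef]
    exact div_ne_zero hAne (by simp [hζ])
  constructor
  · -- forward
    intro hODE
    set G : ℝ → ℝ := fun u => k * Real.log (φ u) - 3 / 2 * u with hGdef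
    set χ : ℝ → ℝ := fun u => Real.exp (G u) with hχdef
    set g1 : ℝ → ℝ := fun u => k * (deriv φ u / φ u) - 3 / 2 with hg1def
    set χd : ℝ → ℝ := fun u => χ u * g1 u with hχddef
    have hχpos : ∀ u, 0 < χ u := fun u => Real.exp_pos _
    have hG' : ∀ u, HasDerivAt G (g1 u) u := by
      intro u
      have hlog : HasDerivAt (fun s => Real.log (φ s)) (deriv φ u / φ u) u :=
        ((hφ u).hasDerivAt).log (hφpos u).ne'
      have h := (hlog.const_mul k).sub ((hasDerivAt_id u).const_mul (3 / 2 : ℝ))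
      simpa [hGdef, hg1def, Pi.sub_def] using h
    have hχ' : ∀ u, HasDerivAt χ (χd u) u := fun u => (hG' u).exp
    have hχd' : ∀ u, HasDerivAt χd (-θ ^ 2 * χ u) u := by
      intro u
      have hdiv : HasDerivAt (fun s => deriv φ s / φ s)
          ((deriv (deriv φ) u * φ u - deriv φ u * deriv φ u) / φ u ^ 2) u :=
        ((hφ' u).hasDerivAt).div ((hφ u).hasDerivAt) (hφpos u).ne'
      have hg1' : HasDerivAt g1
          (k * ((deriv (deriv φ) u * φ u - deriv φ u * deriv φ u) / φ u ^ 2)) u := by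
        have h := (hdiv.const_mul k).sub_const (3 / 2 : ℝ)
        simpa [hg1def] using h
      have h := (hχ' u).mul hg1'
      have hF : φ u ≠ 0 := (hφpos u).ne'
      have hsplit : (deriv (deriv φ) u * φ u - deriv φ u * deriv φ u) / φ u ^ 2
          = deriv (deriv φ) u / φ u - (deriv φ u / φ u) ^ 2 := by
        field_simp
      have hode := hODE u
      rw [mul_div_assoc] at hode
      have key : g1 u ^ 2 +
          k * ((deriv (deriv φ) u * φ u - deriv φ u * deriv φ u) / φ u ^ 2) = -θ ^ 2 := by
        have h2ζ : (2:ℝ) * ζ ≠ 0 := by simp [hζ]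
        have hw : deriv (deriv φ) u / φ u
            = (-Sbar - 6 + 6 * ζ * (deriv φ u / φ u)
              - (A - 2 * ζ) * (deriv φ u / φ u) ^ 2) / (2 * ζ) := by
          rw [eq_div_iff h2ζ]
          linear_combination -hode
        rw [hsplit, hg1def, hkdef, hθ2]
        simp only
        rw [hw]
        field_simp
        ring
      have heq : χd u * g1 u + χ u * (k * ((deriv (deriv φ) u * φ u - deriv φ u * deriv φ u) / φ u ^ 2)) = -θ ^ 2 * χ u := by
        rw [hχddef]
        simp only
        linear_combination (χ u) * key
      rw [heq] at h
      exact h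
    refine ⟨χ 0, χd 0 / θ, ?_, ?_⟩
    · intro t
      have hosc := osc θ hθne χ χd hχ' hχd' t
      have : χ 0 * Real.exp (3 / 2 * t) * Real.cos (θ * t) +
          χd 0 / θ * Real.exp (3 / 2 * t) * Real.sin (θ * t)
          = Real.exp (3 / 2 * t) * χ t := by
        rw [hosc]; ring
      rw [this]
      positivity
    · intro t
      have hosc := osc θ hθne χ χd hχ' hχd' t
      have hXeq : χ 0 * Real.exp (3 / 2 * t) * Real.cos (θ * t) +
          χd 0 / θ * Real.exp (3 / 2 * t) * Real.sin (θ * t)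
          = φ t ^ k := by
        rw [show χ 0 * Real.exp (3 / 2 * t) * Real.cos (θ * t) +
            χd 0 / θ * Real.exp (3 / 2 * t) * Real.sin (θ * t)
            = Real.exp (3 / 2 * t) * χ t by rw [hosc]; ring]
        rw [hχdef]
        simp only [hGdef]
        rw [← Real.exp_add, Real.rpow_def_of_pos (hφpos t)]
        ring_nf
      rw [hXeq, ← Real.rpow_mul (hφpos t).le]
      have hexp : k * (2 * ζ / A) = 1 := by
        rw [hkdef]
        field_simp
      rw [hexp, Real.rpow_one]
  · -- backward
    rintro ⟨c₁, c₂, hpos, hform⟩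
    set r : ℝ := 2 * ζ / A with hrdef
    set E : ℝ → ℝ := fun u => Real.exp (3 / 2 * u) with hEdef
    set K : ℝ → ℝ := fun u => c₁ * Real.cos (θ * u) + c₂ * Real.sin (θ * u) with hKdef
    set D : ℝ → ℝ := fun u => c₂ * Real.cos (θ * u) - c₁ * Real.sin (θ * u) with hDdef
    set M : ℝ → ℝ := fun u => E u * K u with hMdef
    set M1 : ℝ → ℝ := fun u => E u * (3 / 2 * K u + θ * D u) with hM1def
    have hψeq : ∀ u : ℝ, c₁ * Real.exp (3 / 2 * u) * Real.cos (θ * u)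
        + c₂ * Real.exp (3 / 2 * u) * Real.sin (θ * u) = M u := by
      intro u
      simp only [hMdef, hEdef, hKdef]
      ring
    have hMpos : ∀ u, 0 < M u := by
      intro u
      rw [← hψeq u]
      exact hpos u
    have hcos : ∀ s : ℝ, HasDerivAt (fun u => Real.cos (θ * u)) (-Real.sin (θ * s) * θ) s := by
      intro s
      have h := (Real.hasDerivAt_cos (θ * s)).comp s ((hasDerivAt_id s).const_mul θ)
      simpa [Function.comp_def] using h
    have hsin : ∀ s : ℝ, HasDerivAt (fun u => Real.sin (θ * u)) (Real.cos (θ * s) * θ) s := by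
      intro s
      have h := (Real.hasDerivAt_sin (θ * s)).comp s ((hasDerivAt_id s).const_mul θ)
      simpa [Function.comp_def] using h
    have hE' : ∀ u, HasDerivAt E (3 / 2 * E u) u := by
      intro u
      have h := ((hasDerivAt_id u).const_mul (3 / 2 : ℝ)).exp
      simpa [hEdef, mul_comm] using h
    have hK' : ∀ u, HasDerivAt K (θ * D u) u := by
      intro u
      have h := ((hcos u).const_mul c₁).add ((hsin u).const_mul c₂)
      refine h.congr_deriv ?_
      simp only [hDdef]
      ring
    have hD' : ∀ u, HasDerivAt D (-θ * K u) u := by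
      intro u
      have h := ((hcos u).const_mul c₂).sub ((hsin u).const_mul c₁)
      refine h.congr_deriv ?_
      simp only [hKdef]
      ring
    have hM' : ∀ u, HasDerivAt M (M1 u) u := by
      intro u
      have h := (hE' u).mul (hK' u)
      refine h.congr_deriv ?_
      simp only [hM1def]
      ring
    have hM1' : ∀ u, HasDerivAt M1 (3 * M1 u - (θ ^ 2 + 9 / 4) * M u) u := by
      intro u
      have h := (hE' u).mul (((hK' u).const_mul (3 / 2 : ℝ)).add ((hD' u).const_mul θ))
      refine h.congr_deriv ?_
      simp only [hM1def, hMdef, Pi.add_apply]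
      ring
    have hφeq : φ = fun u => Real.exp (r * Real.log (M u)) := by
      funext u
      rw [hform u, hψeq u, Real.rpow_def_of_pos (hMpos u), mul_comm]
    have hφd : ∀ u, HasDerivAt φ (φ u * (r * (M1 u / M u))) u := by
      intro u
      have hlog : HasDerivAt (fun s => Real.log (M s)) (M1 u / M u) u :=
        (hM' u).log (hMpos u).ne'
      have h := (hlog.const_mul r).exp
      rw [hφeq]
      exact h
    have hd1 : deriv φ = fun u => φ u * (r * (M1 u / M u)) := funext fun u => (hφd u).deriv
    intro t
    have hdd : HasDerivAt (deriv φ)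
        (φ t * (r * (M1 t / M t)) * (r * (M1 t / M t)) + φ t *
          (r * (((3 * M1 t - (θ ^ 2 + 9 / 4) * M t) * M t - M1 t * M1 t) / M t ^ 2))) t := by
      rw [hd1]
      exact (hφd t).mul (((hM1' t).div (hM' t) (hMpos t).ne').const_mul r)
    have hDD := hdd.deriv
    rw [hDD, hd1]
    beta_reduce
    have hφne : φ t ≠ 0 := (hφpos t).ne'
    have hMne : M t ≠ 0 := (hMpos t).ne'
    rw [hrdef, hθ2]
    clear_value A k r E K D M M1
    field_simp
    ring
end

section
/- Let η > 0 and S̄ ∈ ℝ, and let φ : ℝ → ℝ be continuously differentiable with φ(t) > 0 for all t. Suppose -η·(φ'(t)/φ(t))² - 6 = S̄ for all t ∈ ℝ. Then S̄ ≤ -6; if S̄ = -6 then φ is constant; and if S̄ < -6 then there exists c₀ > 0 such that either φ(t) = c₀·exp(√(-(S̄+6)/η)·t) for all t ∈ ℝ, or φ(t) = c₀·exp(-√(-(S̄+6)/η)·t) for all t ∈ ℝ. -/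
lemma exp_sol_aux (φ : ℝ → ℝ) (a : ℝ) (hd : Differentiable ℝ φ)
    (h : ∀ t, deriv φ t = a * φ t) : ∀ t, φ t = φ 0 * Real.exp (a * t) := by
  have hderiv : ∀ t, HasDerivAt (fun s => φ s * Real.exp (-a * s)) 0 t := by
    intro t
    have h1 : HasDerivAt φ (a * φ t) t := by
      have := (hd t).hasDerivAt
      rwa [h t] at this
    have h2 : HasDerivAt (fun s : ℝ => Real.exp (-a * s)) (-a * Real.exp (-a * t)) t := by
      have : HasDerivAt (fun s : ℝ => -a * s) (-a) t := by
        simpa using (hasDerivAt_id t).const_mul (-a)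
      simpa [mul_comm] using this.exp
    have : HasDerivAt (fun s => φ s * Real.exp (-a * s)) _ t := h1.mul h2
    convert this using 1
    ring
  have hconst : ∀ t, φ t * Real.exp (-a * t) = φ 0 := by
    intro t
    have := is_const_of_deriv_eq_zero (f := fun s => φ s * Real.exp (-a * s))
      (fun s => (hderiv s).differentiableAt) (fun s => (hderiv s).deriv) t 0
    simpa using this
  intro t
  have := hconst t
  have hne : Real.exp (-a * t) ≠ 0 := Real.exp_ne_zero _
  field_simp [Real.exp_ne_zero] at this ⊢
  rw [← this, mul_assoc, ← Real.exp_add]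
  simp

theorem stmt_18 (η Sbar : ℝ) (hη : 0 < η) (φ : ℝ → ℝ)
    (hφ : ContDiff ℝ 1 φ) (hφpos : ∀ t : ℝ, 0 < φ t)
    (heq : ∀ t : ℝ, -η * (deriv φ t / φ t) ^ 2 - 6 = Sbar) :
    Sbar ≤ -6 ∧
    (Sbar = -6 → ∃ c : ℝ, ∀ t : ℝ, φ t = c) ∧
    (Sbar < -6 → ∃ c₀ : ℝ, 0 < c₀ ∧
      ((∀ t : ℝ, φ t = c₀ * Real.exp (Real.sqrt (-(Sbar + 6) / η) * t)) ∨
       (∀ t : ℝ, φ t = c₀ * Real.exp (-(Real.sqrt (-(Sbar + 6) / η)) * t)))) := by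
  have hd : Differentiable ℝ φ := hφ.differentiable one_ne_zero
  have hne : ∀ t, φ t ≠ 0 := fun t => (hφpos t).ne'
  set h : ℝ → ℝ := fun t => deriv φ t / φ t with hh
  have hsq : ∀ t, h t ^ 2 = -(Sbar + 6) / η := by
    intro t
    have := heq t
    field_simp
    nlinarith [this]
  have hS : Sbar ≤ -6 := by
    have := heq 0
    nlinarith [sq_nonneg (h 0)]
  refine ⟨hS, ?_, ?_⟩
  · intro hS6
    have hz : ∀ t, deriv φ t = 0 := by
      intro t
      have := hsq t
      rw [hS6] at this
      simp at this
      have : h t = 0 := by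
        have h2 : h t ^ 2 = 0 := by
          rw [this]
          norm_num
        exact pow_eq_zero_iff (n := 2) (by norm_num) |>.mp h2
      have := this
      simp only [hh] at this
      exact (div_eq_zero_iff.mp this).resolve_right (hne t)
    exact ⟨φ 0, fun t => is_const_of_deriv_eq_zero hd hz t 0⟩
  · intro hSlt
    set c : ℝ := -(Sbar + 6) / η with hc
    have hcpos : 0 < c := div_pos (by linarith) hη
    set k : ℝ := Real.sqrt c with hk
    have hkpos : 0 < k := Real.sqrt_pos.mpr hcpos
    have hk2 : k ^ 2 = c := Real.sq_sqrt hcpos.le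
    have halt : ∀ t, h t = k ∨ h t = -k := by
      intro t
      have : (h t - k) * (h t + k) = 0 := by
        have := hsq t
        nlinarith [this, hk2]
      rcases mul_eq_zero.mp this with h1 | h1
      · left; linarith
      · right; linarith
    have hcont : Continuous h := by
      exact ((hφ.continuous_deriv le_rfl)).div hφ.continuous hne
    have hnz : ∀ t, h t ≠ 0 := by
      intro t ht
      have := hsq t
      rw [ht] at this
      simp at this
      nlinarith
    have hTrich : (∀ t, h t = k) ∨ (∀ t, h t = -k) := by
      rcases halt 0 with h0 | h0
      · left
        intro t
        rcases halt t with h1 | h1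
        · exact h1
        · exfalso
          have hmem : (0 : ℝ) ∈ Set.uIcc (h 0) (h t) := by
            rw [h0, h1, Set.mem_uIcc]
            right
            constructor <;> linarith
          have := intermediate_value_uIcc (f := h) (a := 0) (b := t) hcont.continuousOn hmem
          obtain ⟨s, _, hs⟩ := this
          exact hnz s hs
      · right
        intro t
        rcases halt t with h1 | h1
        · exfalso
          have hmem : (0 : ℝ) ∈ Set.uIcc (h 0) (h t) := by
            rw [h0, h1, Set.mem_uIcc]
            left
            constructor <;> linarith
          have := intermediate_value_uIcc (f := h) (a := 0) (b := t) hcont.continuousOn hmem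
          obtain ⟨s, _, hs⟩ := this
          exact hnz s hs
        · exact h1
    refine ⟨φ 0, hφpos 0, ?_⟩
    rcases hTrich with hT | hT
    · left
      intro t
      have hode : ∀ s, deriv φ s = k * φ s := by
        intro s
        have h2 : deriv φ s / φ s = k := hT s
        rw [div_eq_iff (hne s)] at h2
        linarith
      exact exp_sol_aux φ k hd hode t
    · right
      intro t
      have hode : ∀ s, deriv φ s = -k * φ s := by
        intro s
        have h2 : deriv φ s / φ s = -k := hT s
        rw [div_eq_iff (hne s)] at h2
        linarith
      exact exp_sol_aux φ (-k) hd hode t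
end

section
/- Let ζ, η, S̄ ∈ ℝ with ζ ≠ 0 and η ≥ 0, let ψ : ℝ → ℝ be twice differentiable with ψ(t) > 0 for all t, and set φ(t) = ψ(t)^{2ζ/(η+ζ²)}. Then -2ζ·φ''(t)/φ(t) - (η + ζ² - 2ζ)·(φ'(t)/φ(t))² + 6ζ·φ'(t)/φ(t) - 6 = S̄ for all t ∈ ℝ if and only if ψ''(t) - 3ψ'(t) + ((S̄+6)(η+ζ²)/(4ζ²))·ψ(t) = 0 for all t ∈ ℝ. -/
theorem stmt_19 (ζ η Sbar : ℝ) (hζ : ζ ≠ 0) (hη : 0 ≤ η) (ψ : ℝ → ℝ)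
    (hψ : Differentiable ℝ ψ) (hψ' : Differentiable ℝ (deriv ψ))
    (hψpos : ∀ t : ℝ, 0 < ψ t) (φ : ℝ → ℝ)
    (hφ : ∀ t : ℝ, φ t = ψ t ^ (2 * ζ / (η + ζ ^ 2))) :
    (∀ t : ℝ, -2 * ζ * deriv (deriv φ) t / φ t
        - (η + ζ ^ 2 - 2 * ζ) * (deriv φ t / φ t) ^ 2
        + 6 * ζ * (deriv φ t / φ t) - 6 = Sbar) ↔
    (∀ t : ℝ, deriv (deriv ψ) t - 3 * deriv ψ t
        + ((Sbar + 6) * (η + ζ ^ 2) / (4 * ζ ^ 2)) * ψ t = 0) := by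
  have hK : 0 < η + ζ ^ 2 := by positivity
  have hKne : η + ζ ^ 2 ≠ 0 := ne_of_gt hK
  set a : ℝ := 2 * ζ / (η + ζ ^ 2) with ha
  have hane : a ≠ 0 := div_ne_zero (by simpa using hζ) hKne
  have hφfun : φ = fun s => ψ s ^ a := funext hφ
  have hd1 : ∀ t, HasDerivAt φ (deriv ψ t * a * ψ t ^ (a - 1)) t := by
    intro t
    rw [hφfun]
    exact (hψ t).hasDerivAt.rpow_const (Or.inl (ne_of_gt (hψpos t)))
  have hd1' : deriv φ = fun t => deriv ψ t * a * ψ t ^ (a - 1) :=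
    funext fun t => (hd1 t).deriv
  have hd2 : ∀ t, deriv (deriv φ) t
      = deriv (deriv ψ) t * a * ψ t ^ (a - 1)
        + deriv ψ t * a * (deriv ψ t * (a - 1) * ψ t ^ (a - 1 - 1)) := by
    intro t
    rw [hd1']
    have h1 : HasDerivAt (fun s => ψ s ^ (a - 1))
        (deriv ψ t * (a - 1) * ψ t ^ (a - 1 - 1)) t :=
      (hψ t).hasDerivAt.rpow_const (Or.inl (ne_of_gt (hψpos t)))
    have h2 : HasDerivAt (fun s => deriv ψ s * a) (deriv (deriv ψ) t * a) t :=
      (hψ' t).hasDerivAt.mul_const a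
    have : HasDerivAt (fun s => deriv ψ s * a * ψ s ^ (a - 1)) _ t := h2.mul h1
    simpa [mul_comm, mul_left_comm, mul_assoc, add_comm] using this.deriv
  refine forall_congr' fun t => ?_
  set x := ψ t with hx
  set v := deriv ψ t with hv
  set w := deriv (deriv ψ) t with hw
  have hxpos : 0 < x := hψpos t
  have hxne : x ≠ 0 := ne_of_gt hxpos
  have hX : (0:ℝ) < x ^ a := Real.rpow_pos_of_pos hxpos a
  have hXne : x ^ a ≠ 0 := ne_of_gt hX
  have e1 : x ^ (a - 1) = x ^ a / x := by
    rw [Real.rpow_sub hxpos, Real.rpow_one]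
  have e2 : x ^ (a - 1 - 1) = x ^ a / x / x := by
    rw [Real.rpow_sub hxpos, Real.rpow_one, e1]
  rw [hd2 t, hd1', hφ t]
  simp only [← hx, ← hv, ← hw, ← ha, e1, e2]
  rw [show (-2 * ζ * (w * a * (x ^ a / x) + v * a * (v * (a - 1) * (x ^ a / x / x))) / x ^ a
      - (η + ζ ^ 2 - 2 * ζ) * (v * a * (x ^ a / x) / x ^ a) ^ 2
      + 6 * ζ * (v * a * (x ^ a / x) / x ^ a) - 6 : ℝ)
      = -(4 * ζ ^ 2 / (η + ζ ^ 2)) * ((w - 3 * v) / x) - 6 from by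
    rw [ha]; field_simp; ring]
  constructor
  · intro h
    have h' : (w - 3 * v) / x = -((Sbar + 6) * (η + ζ ^ 2) / (4 * ζ ^ 2)) := by
      have hz : (4 * ζ ^ 2 : ℝ) ≠ 0 := by positivity
      field_simp at h ⊢
      linear_combination -h
    field_simp at h' ⊢
    linear_combination h'
  · intro h
    have h' : w - 3 * v = -((Sbar + 6) * (η + ζ ^ 2) / (4 * ζ ^ 2)) * x := by
      linarith
    rw [h']
    field_simp
    ring
end
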